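/- arXiv:1308.0576 — 2 statements merged into one kernel-verified Lean document; each statement's English description precedes it below -/
import Mathlib

section
/- Let R be a Markov probability measure, and let P = h(X_0, X_1) · R (for nonnegative measurable h, E_R h = 1) be Markov. Suppose there exist t₀ ∈ (0,1) and a measurable set 𝒳₀ ⊆ 𝒳 with R_{t₀}(𝒳₀) > 0 such that for every z ∈ 𝒳₀, R_{01} ≪ R((X_0, X_1) ∈ · | X_{t₀} = z). Then there exist nonnegative measurable functions f₀, g₁ on 𝒳 such that dP/dR = f₀(X_0) g₁(X_1), R-a.s. -/
open MeasureTheory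

noncomputable section

variable {Ω 𝒳 : Type*}

/-- σ-algebra generated by the canonical process on the time window `[s,u]`. -/
def window [MeasurableSpace 𝒳] (X : ℝ → Ω → 𝒳) (s u : ℝ) : MeasurableSpace Ω :=
  ⨆ r ∈ Set.Icc s u, MeasurableSpace.comap (X r) inferInstance

/-- σ-algebra generated by the position at time `t`. -/
def at1 [MeasurableSpace 𝒳] (X : ℝ → Ω → 𝒳) (t : ℝ) : MeasurableSpace Ω :=
  MeasurableSpace.comap (X t) inferInstance

/-- σ-algebra generated by the pair of positions at times `s` and `u`. -/
def at2 [MeasurableSpace 𝒳] (X : ℝ → Ω → 𝒳) (s u : ℝ) : MeasurableSpace Ω :=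
  MeasurableSpace.comap (fun ω => (X s ω, X u ω)) inferInstance

/-- Indicator function of an event, real-valued. -/
def ind (A : Set Ω) : Ω → ℝ := A.indicator (fun _ => 1)

/-- The two-sided (symmetric) Markov property: for every time `t ∈ [0,1]`, past and future
events are conditionally independent given the present position `X t`. -/
def IsMarkov [MeasurableSpace Ω] [MeasurableSpace 𝒳]
    (X : ℝ → Ω → 𝒳) (P : Measure Ω) : Prop :=
  ∀ t ∈ Set.Icc (0:ℝ) 1, ∀ A B : Set Ω,
    MeasurableSet[window X 0 t] A → MeasurableSet[window X t 1] B →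
    P[ind (A ∩ B) | at1 X t] =ᵐ[P] P[ind A | at1 X t] * P[ind B | at1 X t]

/-- The reciprocal property: for all `0 ≤ s ≤ u ≤ 1`, the events inside `[s,u]` and those
outside are conditionally independent given the pair `(X s, X u)`. -/
def IsReciprocal [MeasurableSpace Ω] [MeasurableSpace 𝒳]
    (X : ℝ → Ω → 𝒳) (P : Measure Ω) : Prop :=
  ∀ s u : ℝ, 0 ≤ s → s ≤ u → u ≤ 1 → ∀ A B C : Set Ω,
    MeasurableSet[window X 0 s] A → MeasurableSet[window X s u] B →
    MeasurableSet[window X u 1] C →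
    P[ind (A ∩ B ∩ C) | at2 X s u] =ᵐ[P]
      P[ind (A ∩ C) | at2 X s u] * P[ind B | at2 X s u]

section Aux
open MeasurableSpace Set

variable {𝒳 : Type*} [m𝒳 : MeasurableSpace 𝒳]

/-- `T` is measurable w.r.t. a product of a countably generated sub-σ-algebra. -/
def InCG (𝒳 : Type*) [m𝒳 : MeasurableSpace 𝒳] (T : Set (𝒳 × 𝒳)) : Prop :=
  ∃ g : ℕ → Set 𝒳, (∀ n, MeasurableSet (g n)) ∧
    MeasurableSet[(generateFrom (Set.range g)).prod (generateFrom (Set.range g))] T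

lemma prod_mono {α β : Type*} {m₁ m₁' : MeasurableSpace α} {m₂ m₂' : MeasurableSpace β}
    (h₁ : m₁ ≤ m₁') (h₂ : m₂ ≤ m₂') : m₁.prod m₂ ≤ m₁'.prod m₂' :=
  sup_le_sup (MeasurableSpace.comap_mono h₁) (MeasurableSpace.comap_mono h₂)

lemma InCG.mono {T : Set (𝒳 × 𝒳)} {g g' : ℕ → Set 𝒳} (hsub : Set.range g ⊆ Set.range g')
    (hT : MeasurableSet[(generateFrom (Set.range g)).prod (generateFrom (Set.range g))] T) :
    MeasurableSet[(generateFrom (Set.range g')).prod (generateFrom (Set.range g'))] T :=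
  prod_mono (generateFrom_mono hsub) (generateFrom_mono hsub) T hT

lemma inCG_of_measurableSet {T : Set (𝒳 × 𝒳)} (hT : MeasurableSet T) : InCG 𝒳 T := by
  let M : MeasurableSpace (𝒳 × 𝒳) :=
    { MeasurableSet' := InCG 𝒳
      measurableSet_empty := ⟨fun _ => ∅, fun _ => MeasurableSet.empty,
        @MeasurableSet.empty _ ((generateFrom (Set.range fun _ => (∅ : Set 𝒳))).prod
          (generateFrom (Set.range fun _ => (∅ : Set 𝒳))))⟩
      measurableSet_compl := by
        rintro T ⟨g, hg, hT⟩
        exact ⟨g, hg, hT.compl⟩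
      measurableSet_iUnion := by
        rintro f hf
        choose G hG hGT using hf
        refine ⟨fun n => G (Nat.unpair n).1 (Nat.unpair n).2, fun n => hG _ _, ?_⟩
        refine MeasurableSet.iUnion fun i => InCG.mono ?_ (hGT i)
        rintro s ⟨j, rfl⟩
        exact ⟨Nat.pair i j, by simp [Nat.unpair_pair]⟩ }
  have hle : (m𝒳.prod m𝒳 : MeasurableSpace (𝒳 × 𝒳)) ≤ M := by
    refine sup_le ?_ ?_
    · rintro s ⟨s', hs', rfl⟩
      refine ⟨fun _ => s', fun _ => hs', ?_⟩
      exact @measurable_fst _ _ (generateFrom (Set.range fun _ => s'))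
        (generateFrom (Set.range fun _ => s')) _ (measurableSet_generateFrom ⟨0, rfl⟩)
    · rintro s ⟨s', hs', rfl⟩
      refine ⟨fun _ => s', fun _ => hs', ?_⟩
      exact @measurable_snd _ _ (generateFrom (Set.range fun _ => s'))
        (generateFrom (Set.range fun _ => s')) _ (measurableSet_generateFrom ⟨0, rfl⟩)
  exact hle T hT

lemma exists_cg_of_measurable {h : 𝒳 × 𝒳 → ENNReal} (hh : Measurable h) :
    ∃ g : ℕ → Set 𝒳, (∀ n, MeasurableSet (g n)) ∧
      Measurable[(generateFrom (Set.range g)).prod (generateFrom (Set.range g))] h := by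
  -- σ(h) is countably generated
  have hcg : @CountablyGenerated (𝒳 × 𝒳) (MeasurableSpace.comap h inferInstance) :=
    CountablyGenerated.comap h
  obtain ⟨b, hbc, hbgen⟩ := hcg.isCountablyGenerated
  -- enumerate (insert ∅ b)
  obtain ⟨e, he⟩ := (hbc.insert ∅).exists_eq_range (insert_nonempty _ _)
  have heC : ∀ n, InCG 𝒳 (e n) := by
    intro n
    have : e n ∈ insert ∅ b := by rw [he]; exact ⟨n, rfl⟩
    rcases this with h' | h'
    · rw [h']; exact inCG_of_measurableSet MeasurableSet.empty
    · refine inCG_of_measurableSet ?_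
      have : MeasurableSpace.comap h inferInstance ≤ m𝒳.prod m𝒳 := hh.comap_le
      exact this _ (by rw [hbgen]; exact measurableSet_generateFrom h')
  choose G hG hGT using heC
  refine ⟨fun n => G (Nat.unpair n).1 (Nat.unpair n).2, fun n => hG _ _, ?_⟩
  set g : ℕ → Set 𝒳 := fun n => G (Nat.unpair n).1 (Nat.unpair n).2 with hgdef
  have hmono : ∀ i, MeasurableSet[(generateFrom (Set.range g)).prod (generateFrom (Set.range g))]
      (e i) := by
    intro i
    refine InCG.mono ?_ (hGT i)
    rintro s ⟨j, rfl⟩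
    exact ⟨Nat.pair i j, by simp [hgdef, Nat.unpair_pair]⟩
  rw [measurable_iff_comap_le, hbgen]
  refine generateFrom_le fun t ht => ?_
  have : t ∈ insert ∅ b := mem_insert_of_mem _ ht
  rw [he] at this
  obtain ⟨n, rfl⟩ := this
  exact hmono n

/-- Finite intersections from a countable generating family: a countable π-system. -/
def piInter (g : ℕ → Set 𝒳) (F : Finset ℕ) : Set 𝒳 := ⋂ i ∈ F, g i

lemma piInter_empty (g : ℕ → Set 𝒳) : piInter g ∅ = univ := by simp [piInter]

lemma piInter_union (g : ℕ → Set 𝒳) (F F' : Finset ℕ) :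
    piInter g (F ∪ F') = piInter g F ∩ piInter g F' := by
  simp only [piInter]
  ext x
  simp only [Set.mem_iInter, Finset.mem_union, Set.mem_inter_iff]
  constructor
  · intro hx; exact ⟨fun i hi => hx i (Or.inl hi), fun i hi => hx i (Or.inr hi)⟩
  · rintro ⟨h1, h2⟩ i (hi | hi); exacts [h1 i hi, h2 i hi]

lemma measurableSet_piInter {g : ℕ → Set 𝒳} (hg : ∀ n, MeasurableSet (g n)) (F : Finset ℕ) :
    MeasurableSet (piInter g F) := F.measurableSet_biInter fun i _ => hg i

lemma measurableSet_piInter_generateFrom (g : ℕ → Set 𝒳) (F : Finset ℕ) :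
    MeasurableSet[generateFrom (Set.range g)] (piInter g F) :=
  F.measurableSet_biInter fun i _ => measurableSet_generateFrom ⟨i, rfl⟩

lemma isPiSystem_piInter (g : ℕ → Set 𝒳) : IsPiSystem (Set.range (piInter g)) := by
  rintro _ ⟨F, rfl⟩ _ ⟨F', rfl⟩ _
  exact ⟨F ∪ F', (piInter_union g F F').symm ▸ rfl⟩

lemma isCountablySpanning_piInter (g : ℕ → Set 𝒳) : IsCountablySpanning (Set.range (piInter g)) :=
  ⟨fun _ => piInter g ∅, fun _ => mem_range_self _, by simp [piInter_empty, Set.iUnion_const]⟩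

lemma generateFrom_piInter (g : ℕ → Set 𝒳) :
    generateFrom (Set.range (piInter g)) = generateFrom (Set.range g) := by
  refine le_antisymm (generateFrom_le ?_) (generateFrom_le ?_)
  · rintro _ ⟨F, rfl⟩
    exact measurableSet_piInter_generateFrom g F
  · rintro _ ⟨i, rfl⟩
    have : g i = piInter g {i} := by simp [piInter]
    rw [this]
    exact measurableSet_generateFrom ⟨{i}, rfl⟩
lemma core_factorization (g : ℕ → Set 𝒳)
    (hgen : m𝒳 = MeasurableSpace.generateFrom (Set.range g))
    (h : 𝒳 × 𝒳 → ENNReal) (hh : Measurable h)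
    (κz : Measure (𝒳 × 𝒳)) [IsProbabilityMeasure κz]
    (c : ENNReal) (hc0 : c ≠ 0) (hc : c ≠ ⊤) (hcdef : ∫⁻ p, h p ∂κz = c)
    (hprodR : ∀ F F' : Finset ℕ, κz (piInter g F ×ˢ piInter g F') =
      κz (piInter g F ×ˢ univ) * κz (univ ×ˢ piInter g F'))
    (hprodP : ∀ F F' : Finset ℕ, c * ∫⁻ q in piInter g F ×ˢ piInter g F', h q ∂κz
      = (∫⁻ q in piInter g F ×ˢ univ, h q ∂κz) * (∫⁻ q in univ ×ˢ piInter g F', h q ∂κz)) :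
    ∃ f₀ g₁ : 𝒳 → ENNReal, Measurable f₀ ∧ Measurable g₁ ∧
      ∀ᵐ q ∂κz, h q = f₀ q.1 * g₁ q.2 := by
  have hg : ∀ n, MeasurableSet (g n) := fun n => by
    rw [hgen]; exact measurableSet_generateFrom ⟨n, rfl⟩
  have hpm : ∀ F, MeasurableSet (piInter g F) := measurableSet_piInter hg
  -- the generating rectangles π-system
  set C : Set (Set (𝒳 × 𝒳)) := image2 (· ×ˢ ·) (Set.range (piInter g)) (Set.range (piInter g))
    with hC
  have hCgen : generateFrom C = Prod.instMeasurableSpace :=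
    generateFrom_eq_prod (by rw [generateFrom_piInter g, ← hgen])
      (by rw [generateFrom_piInter g, ← hgen])
      (isCountablySpanning_piInter g) (isCountablySpanning_piInter g)
  have hCpi : IsPiSystem C := (isPiSystem_piInter g).prod (isPiSystem_piInter g)
  -- marginals
  set α := κz.map Prod.fst with hα
  set β := κz.map Prod.snd with hβ
  set m := κz.withDensity h with hm
  have hmfin : IsFiniteMeasure m := by
    constructor
    rw [hm, withDensity_apply _ MeasurableSet.univ, setLIntegral_univ, hcdef]
    exact hc.lt_top
  set ρ₀ := m.map Prod.fst with hρ₀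
  set ρ₁ := m.map Prod.snd with hρ₁
  have hρ₀app : ∀ s, MeasurableSet s → ρ₀ s = ∫⁻ q in s ×ˢ univ, h q ∂κz := by
    intro s hs
    rw [hρ₀, Measure.map_apply measurable_fst hs, hm, ← Set.prod_univ,
      withDensity_apply _ (hs.prod MeasurableSet.univ)]
  have hρ₁app : ∀ s, MeasurableSet s → ρ₁ s = ∫⁻ q in univ ×ˢ s, h q ∂κz := by
    intro s hs
    rw [hρ₁, Measure.map_apply measurable_snd hs, hm, ← Set.univ_prod,
      withDensity_apply _ (MeasurableSet.univ.prod hs)]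
  have hαapp : ∀ s, MeasurableSet s → α s = κz (s ×ˢ univ) := by
    intro s hs
    rw [hα, Measure.map_apply measurable_fst hs, ← Set.prod_univ]
  have hβapp : ∀ s, MeasurableSet s → β s = κz (univ ×ˢ s) := by
    intro s hs
    rw [hβ, Measure.map_apply measurable_snd hs, ← Set.univ_prod]
  -- (a) κz is a product measure
  have hκprod : κz = α.prod β := by
    refine MeasureTheory.ext_of_generate_finite C hCgen.symm hCpi ?_ ?_
    · rintro _ ⟨_, ⟨F, rfl⟩, _, ⟨F', rfl⟩, rfl⟩
      rw [Measure.prod_prod, hαapp _ (hpm F), hβapp _ (hpm F'), hprodR F F']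
    · rw [← Set.univ_prod_univ, Measure.prod_prod, hαapp _ MeasurableSet.univ,
        hβapp _ MeasurableSet.univ]
      simp
  -- (c) c • m is the product of ρ₀ and ρ₁
  have hmprod : c • m = ρ₀.prod ρ₁ := by
    have : IsFiniteMeasure (c • m) := by
      constructor
      simp only [Measure.smul_apply, smul_eq_mul]
      exact ENNReal.mul_lt_top hc.lt_top (measure_lt_top m univ)
    refine MeasureTheory.ext_of_generate_finite C hCgen.symm hCpi ?_ ?_
    · rintro _ ⟨_, ⟨F, rfl⟩, _, ⟨F', rfl⟩, rfl⟩
      rw [Measure.prod_prod, hρ₀app _ (hpm F), hρ₁app _ (hpm F'), Measure.smul_apply,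
        smul_eq_mul, hm, withDensity_apply _ ((hpm F).prod (hpm F'))]
      exact hprodP F F'
    · have h1 : m univ = c := by
        rw [hm, withDensity_apply _ MeasurableSet.univ, setLIntegral_univ, hcdef]
      have h2 : ρ₀ univ = c := by
        rw [hρ₀app _ MeasurableSet.univ, Set.univ_prod_univ, setLIntegral_univ, hcdef]
      have h3 : ρ₁ univ = c := by
        rw [hρ₁app _ MeasurableSet.univ, Set.univ_prod_univ, setLIntegral_univ, hcdef]
      rw [← Set.univ_prod_univ, Measure.prod_prod, h2, h3, Measure.smul_apply, smul_eq_mul,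
        Set.univ_prod_univ, h1]
  -- finiteness and absolute continuity of marginals
  haveI : IsProbabilityMeasure α := Measure.isProbabilityMeasure_map measurable_fst.aemeasurable
  haveI : IsProbabilityMeasure β := Measure.isProbabilityMeasure_map measurable_snd.aemeasurable
  haveI : IsFiniteMeasure ρ₀ := by
    constructor
    rw [hρ₀]
    rw [Measure.map_apply measurable_fst MeasurableSet.univ]
    exact (measure_lt_top m _)
  haveI : IsFiniteMeasure ρ₁ := by
    constructor
    rw [hρ₁, Measure.map_apply measurable_snd MeasurableSet.univ]
    exact (measure_lt_top m _)
  have habs₀ : ρ₀ ≪ α := by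
    refine Measure.AbsolutelyContinuous.mk fun s hsm hαs => ?_
    rw [hρ₀app _ hsm]
    have : κz (s ×ˢ univ) = 0 := by rw [← hαapp _ hsm]; exact hαs
    rw [setLIntegral_measure_zero _ _ this]
  have habs₁ : ρ₁ ≪ β := by
    refine Measure.AbsolutelyContinuous.mk fun s hsm hβs => ?_
    rw [hρ₁app _ hsm]
    have : κz (univ ×ˢ s) = 0 := by rw [← hβapp _ hsm]; exact hβs
    rw [setLIntegral_measure_zero _ _ this]
  set f := ρ₀.rnDeriv α with hfdef
  set g₁ := ρ₁.rnDeriv β with hg₁def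
  have hf : Measurable f := Measure.measurable_rnDeriv _ _
  have hg₁ : Measurable g₁ := Measure.measurable_rnDeriv _ _
  have hρ₀f : ∀ s, MeasurableSet s → ∫⁻ x in s, f x ∂α = ρ₀ s := fun s hs =>
    Measure.setLIntegral_rnDeriv' habs₀ hs
  have hρ₁g : ∀ s, MeasurableSet s → ∫⁻ x in s, g₁ x ∂β = ρ₁ s := fun s hs =>
    Measure.setLIntegral_rnDeriv' habs₁ hs
  -- (e) product withDensity
  have l2 : ρ₀.prod ρ₁ = (α.prod β).withDensity (fun q => f q.1 * g₁ q.2) := by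
    refine Measure.prod_eq fun s t hs ht => ?_
    rw [withDensity_apply _ (hs.prod ht), ← Measure.prod_restrict,
      lintegral_prod_mul (hf.aemeasurable) (hg₁.aemeasurable), hρ₀f s hs, hρ₁g t ht]
  -- combine
  have key : (α.prod β).withDensity (fun q => c * h q)
      = (α.prod β).withDensity (fun q => f q.1 * g₁ q.2) := by
    have l1 : (α.prod β).withDensity (fun q => c * h q) = c • m := by
      rw [← hκprod, hm, ← withDensity_smul c hh]
      rfl
    rw [l1, hmprod, l2]
  have hfin : ∫⁻ q, c * h q ∂(α.prod β) ≠ ⊤ := by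
    rw [← hκprod, lintegral_const_mul c hh, hcdef]
    exact ENNReal.mul_ne_top hc hc
  have hae : (fun q => c * h q) =ᵐ[α.prod β] fun q => f q.1 * g₁ q.2 :=
    (withDensity_eq_iff ((measurable_const.mul hh).aemeasurable)
      ((hf.comp measurable_fst).mul (hg₁.comp measurable_snd)).aemeasurable hfin).mp key
  rw [← hκprod] at hae
  refine ⟨fun x => c⁻¹ * f x, g₁, measurable_const.mul hf, hg₁, ?_⟩
  filter_upwards [hae] with q hq
  calc h q = c⁻¹ * (c * h q) := by
        rw [← mul_assoc, ENNReal.inv_mul_cancel hc0 hc, one_mul]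
    _ = c⁻¹ * (f q.1 * g₁ q.2) := by rw [hq]
    _ = (c⁻¹ * f q.1) * g₁ q.2 := by ring
end Aux
lemma condexp_indicator_eq_of_lintegral {Ω 𝒳 : Type*} [m0 : MeasurableSpace Ω]
    [MeasurableSpace 𝒳] (Q : Measure Ω) [IsProbabilityMeasure Q]
    (Y : Ω → 𝒳) (hY : Measurable Y) (A : Set Ω) (hA : MeasurableSet A)
    (ψ : 𝒳 → ENNReal) (hψ : Measurable ψ) (hψ1 : ∀ z, ψ z ≤ 1)
    (hid : ∀ S : Set 𝒳, MeasurableSet S →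
      Q (A ∩ Y ⁻¹' S) = ∫⁻ z in S, ψ z ∂(Q.map Y)) :
    Q[(A.indicator (fun _ => (1:ℝ)) : Ω → ℝ) | MeasurableSpace.comap Y inferInstance]
      =ᵐ[Q] fun ω => (ψ (Y ω)).toReal := by
  have hm : MeasurableSpace.comap Y inferInstance ≤ m0 := hY.comap_le
  have hYm : Measurable[MeasurableSpace.comap Y inferInstance] Y :=
    measurable_iff_comap_le.mpr le_rfl
  have hgm : Measurable[MeasurableSpace.comap Y inferInstance] fun ω => (ψ (Y ω)).toReal :=
    (ENNReal.measurable_toReal.comp hψ).comp hYm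
  have hψY : Measurable fun ω => ψ (Y ω) := hψ.comp hY
  refine (ae_eq_condExp_of_forall_setIntegral_eq hm
    ((integrable_const (1:ℝ)).indicator hA) (fun s _ _ => ?_) (fun s hs hfin => ?_) ?_).symm
  · -- integrability on s
    refine Integrable.integrableOn ?_
    refine Integrable.mono' (integrable_const (1:ℝ))
      ((hgm.mono hm le_rfl).aestronglyMeasurable) ?_
    refine Filter.Eventually.of_forall fun ω => ?_
    rw [Real.norm_eq_abs, abs_of_nonneg ENNReal.toReal_nonneg]
    exact ENNReal.toReal_le_of_le_ofReal zero_le_one (by simpa using hψ1 (Y ω))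
  · -- set integral equality
    obtain ⟨S, hS, rfl⟩ := hs
    have h1 : ∫ ω in Y ⁻¹' S, A.indicator (fun _ => (1:ℝ)) ω ∂Q
        = (Q (A ∩ Y ⁻¹' S)).toReal := by
      rw [setIntegral_indicator hA, setIntegral_const, smul_eq_mul, mul_one, Set.inter_comm, measureReal_def]
    have h2 : ∫ ω in Y ⁻¹' S, (ψ (Y ω)).toReal ∂Q
        = (∫⁻ ω in Y ⁻¹' S, ψ (Y ω) ∂Q).toReal := by
      rw [← integral_toReal (hψY.aemeasurable.restrict) ?_]
      exact Filter.Eventually.of_forall fun ω => lt_of_le_of_lt (hψ1 _) ENNReal.one_lt_top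
    rw [h1, h2, ← setLIntegral_map hS hψ hY, ← hid S hS]
  · exact ⟨fun ω => (ψ (Y ω)).toReal, hgm.stronglyMeasurable, Filter.EventuallyEq.rfl⟩

section Transfer
open MeasurableSpace Set

lemma transfer_factorization {𝒳 : Type*} [m𝒳 : MeasurableSpace 𝒳]
    (gg : ℕ → Set 𝒳) (hgg : ∀ n, MeasurableSet (gg n))
    (h : 𝒳 × 𝒳 → ENNReal)
    (hggh : Measurable[(MeasurableSpace.generateFrom (Set.range gg)).prod (MeasurableSpace.generateFrom (Set.range gg))] h)
    (κz : Measure (𝒳 × 𝒳)) [IsProbabilityMeasure κz]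
    (c : ENNReal) (hc0 : c ≠ 0) (hcT : c ≠ ⊤) (hcdef : ∫⁻ p, h p ∂κz = c)
    (hzR : ∀ F F' : Finset ℕ, κz (piInter gg F ×ˢ piInter gg F')
        = κz (piInter gg F ×ˢ Set.univ) * κz (Set.univ ×ˢ piInter gg F'))
    (hzP : ∀ F F' : Finset ℕ, c * ∫⁻ p in piInter gg F ×ˢ piInter gg F', h p ∂κz
        = (∫⁻ p in piInter gg F ×ˢ Set.univ, h p ∂κz)
          * (∫⁻ p in Set.univ ×ˢ piInter gg F', h p ∂κz)) :
    ∃ f₀ g₁ : 𝒳 → ENNReal, Measurable f₀ ∧ Measurable g₁ ∧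
      ∃ E : Set (𝒳 × 𝒳), MeasurableSet E ∧ κz E = 0 ∧ ∀ q ∉ E, h q = f₀ q.1 * g₁ q.2 := by
  have hAle : (MeasurableSpace.generateFrom (Set.range gg)) ≤ m𝒳 :=
    MeasurableSpace.generateFrom_le (by rintro _ ⟨n, rfl⟩; exact hgg n)
  have hAAle : (MeasurableSpace.generateFrom (Set.range gg)).prod (MeasurableSpace.generateFrom (Set.range gg)) ≤ (inferInstance : MeasurableSpace (𝒳 × 𝒳)) :=
    prod_mono hAle hAle
  have hidm : @Measurable (𝒳 × 𝒳) (𝒳 × 𝒳) _ ((MeasurableSpace.generateFrom (Set.range gg)).prod (MeasurableSpace.generateFrom (Set.range gg))) id :=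
    measurable_id'' hAAle
  set κt : @Measure (𝒳 × 𝒳) ((MeasurableSpace.generateFrom (Set.range gg)).prod (MeasurableSpace.generateFrom (Set.range gg))) :=
    @Measure.map (𝒳 × 𝒳) (𝒳 × 𝒳) _ ((MeasurableSpace.generateFrom (Set.range gg)).prod (MeasurableSpace.generateFrom (Set.range gg))) id κz with hκt
  have hκtapp : ∀ T : Set (𝒳 × 𝒳), MeasurableSet[(MeasurableSpace.generateFrom (Set.range gg)).prod (MeasurableSpace.generateFrom (Set.range gg))] T → κt T = κz T := by
    intro T hT
    rw [hκt, Measure.map_apply hidm hT, Set.preimage_id]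
  haveI hκtprob : @IsProbabilityMeasure _ ((MeasurableSpace.generateFrom (Set.range gg)).prod (MeasurableSpace.generateFrom (Set.range gg))) κt :=
    ⟨by rw [hκtapp _ (@MeasurableSet.univ _ ((MeasurableSpace.generateFrom (Set.range gg)).prod (MeasurableSpace.generateFrom (Set.range gg))))]; exact measure_univ⟩
  have hsetint : ∀ T : Set (𝒳 × 𝒳), MeasurableSet[(MeasurableSpace.generateFrom (Set.range gg)).prod (MeasurableSpace.generateFrom (Set.range gg))] T →
      ∫⁻ p in T, h p ∂κt = ∫⁻ p in T, h p ∂κz := by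
    intro T hT
    rw [hκt, ← lintegral_indicator hT h, @lintegral_map _ _ _ ((MeasurableSpace.generateFrom (Set.range gg)).prod (MeasurableSpace.generateFrom (Set.range gg))) κz _ _ ((hggh.indicator hT)) hidm]
    simp only [id_eq]
    rw [lintegral_indicator (hAAle _ hT) h]
  have hlint : ∫⁻ p, h p ∂κt = c := by
    rw [hκt, @lintegral_map _ _ _ ((MeasurableSpace.generateFrom (Set.range gg)).prod (MeasurableSpace.generateFrom (Set.range gg))) κz _ _ hggh hidm]
    exact hcdef
  have hpA : ∀ F, MeasurableSet[(MeasurableSpace.generateFrom (Set.range gg))] (piInter gg F) := fun F =>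
    measurableSet_piInter_generateFrom gg F
  obtain ⟨f₀, g₁, hf₀, hg₁, hae⟩ :=
    @core_factorization 𝒳 (MeasurableSpace.generateFrom (Set.range gg)) gg rfl h hggh κt hκtprob c hc0 hcT hlint
      (fun F F' => by
        rw [hκtapp _ (MeasurableSet.prod (hpA F) (hpA F')),
          hκtapp _ (MeasurableSet.prod (hpA F) (@MeasurableSet.univ _ (MeasurableSpace.generateFrom (Set.range gg)))),
          hκtapp _ (MeasurableSet.prod (@MeasurableSet.univ _ (MeasurableSpace.generateFrom (Set.range gg))) (hpA F'))]
        exact hzR F F')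
      (fun F F' => by
        rw [hsetint _ (MeasurableSet.prod (hpA F) (hpA F')),
          hsetint _ (MeasurableSet.prod (hpA F) (@MeasurableSet.univ _ (MeasurableSpace.generateFrom (Set.range gg)))),
          hsetint _ (MeasurableSet.prod (@MeasurableSet.univ _ (MeasurableSpace.generateFrom (Set.range gg))) (hpA F'))]
        exact hzP F F')
  have hEA : MeasurableSet[(MeasurableSpace.generateFrom (Set.range gg)).prod (MeasurableSpace.generateFrom (Set.range gg))] {q : 𝒳 × 𝒳 | ¬ (h q = f₀ q.1 * g₁ q.2)} := by
    have h1 : Measurable[(MeasurableSpace.generateFrom (Set.range gg)).prod (MeasurableSpace.generateFrom (Set.range gg))] fun q : 𝒳 × 𝒳 => f₀ q.1 * g₁ q.2 :=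
      (hf₀.comp (@measurable_fst _ _ (MeasurableSpace.generateFrom (Set.range gg)) (MeasurableSpace.generateFrom (Set.range gg)))).mul
        (hg₁.comp (@measurable_snd _ _ (MeasurableSpace.generateFrom (Set.range gg)) (MeasurableSpace.generateFrom (Set.range gg))))
    exact (StronglyMeasurable.measurableSet_eq_fun hggh.stronglyMeasurable
      h1.stronglyMeasurable).compl
  have hκzE : κz {q : 𝒳 × 𝒳 | ¬ (h q = f₀ q.1 * g₁ q.2)} = 0 := by
    rw [← hκtapp _ hEA]
    exact ae_iff.mp hae
  exact ⟨f₀, g₁, hf₀.mono hAle le_rfl, hg₁.mono hAle le_rfl,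
    {q : 𝒳 × 𝒳 | ¬ (h q = f₀ q.1 * g₁ q.2)}, hAAle _ hEA, hκzE,
    fun q hq => not_not.mp hq⟩

end Transfer

/-- if `R` is Markov, `P = h(X_0,X_1)·R` is Markov, and the endpoint marginal
`R_{01}` is dominated by the conditional law of `(X_0,X_1)` given `X_{t₀} = z` for all `z` in a
set of positive `R_{t₀}`-measure, then `h` factorizes: `dP/dR = f₀(X_0) g₁(X_1)` `R`-a.s. -/
theorem markov_in_reciprocal_class_factorizes
    [MeasurableSpace Ω] [MeasurableSpace 𝒳]
    (X : ℝ → Ω → 𝒳) (hX : ∀ t, Measurable (X t))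
    (R : Measure Ω) [IsProbabilityMeasure R] (hR : IsMarkov X R)
    (h : 𝒳 × 𝒳 → ENNReal) (hh : Measurable h)
    (hnorm : ∫⁻ p, h p ∂(R.map (fun ω => (X 0 ω, X 1 ω))) = 1)
    (P : Measure Ω) (hP : P = R.withDensity (fun ω => h (X 0 ω, X 1 ω)))
    (hPMarkov : IsMarkov X P)
    -- the regular conditional law of `(X_0, X_1)` given `X_{t₀} = z`:
    (t₀ : ℝ) (ht₀ : t₀ ∈ Set.Ioo (0:ℝ) 1)
    (κ : 𝒳 → Measure (𝒳 × 𝒳)) (hκmeas : Measurable κ)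
    (hκprob : ∀ z, IsProbabilityMeasure (κ z))
    (hκ : ∀ S : Set 𝒳, MeasurableSet S → ∀ T : Set (𝒳 × 𝒳), MeasurableSet T →
      R {ω | X t₀ ω ∈ S ∧ (X 0 ω, X 1 ω) ∈ T} = ∫⁻ z in S, κ z T ∂(R.map (X t₀)))
    (𝒳o : Set 𝒳) (h𝒳o : MeasurableSet 𝒳o) (hpos : 0 < (R.map (X t₀)) 𝒳o)
    (habs : ∀ z ∈ 𝒳o, R.map (fun ω => (X 0 ω, X 1 ω)) ≪ κ z) :
    ∃ f₀ g₁ : 𝒳 → ENNReal, Measurable f₀ ∧ Measurable g₁ ∧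
      ∀ᵐ ω ∂ R, h (X 0 ω, X 1 ω) = f₀ (X 0 ω) * g₁ (X 1 ω) := by
  classical
  obtain ⟨ht₀0, ht₀1⟩ := ht₀
  have hpairm : Measurable (fun ω => (X 0 ω, X 1 ω)) := (hX 0).prodMk (hX 1)
  set pair : Ω → 𝒳 × 𝒳 := fun ω => (X 0 ω, X 1 ω) with hpairdef
  set ν : Measure 𝒳 := R.map (X t₀) with hνdef
  set μ2 : Measure (𝒳 × 𝒳) := R.map pair with hμdef
  haveI : IsProbabilityMeasure ν := Measure.isProbabilityMeasure_map (hX t₀).aemeasurable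
  haveI : IsProbabilityMeasure μ2 := Measure.isProbabilityMeasure_map hpairm.aemeasurable
  set κ' : ProbabilityTheory.Kernel 𝒳 (𝒳 × 𝒳) := ⟨κ, hκmeas⟩ with hκ'def
  haveI : ProbabilityTheory.IsMarkovKernel κ' := ⟨hκprob⟩
  have hXtpair : Measurable fun ω => (X t₀ ω, pair ω) := (hX t₀).prodMk hpairm
  -- disintegration of R over the time-t₀ marginal
  have hdis : R.map (fun ω => (X t₀ ω, pair ω)) = ν.compProd κ' := by
    refine MeasureTheory.ext_of_generate_finite _ generateFrom_prod.symm isPiSystem_prod ?_ ?_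
    · rintro _ ⟨S, hS, T, hT, rfl⟩
      rw [Measure.map_apply hXtpair (MeasurableSet.prod (show MeasurableSet S from hS)
        (show MeasurableSet T from hT)),
        Measure.compProd_apply_prod (show MeasurableSet S from hS) (show MeasurableSet T from hT)]
      exact hκ S hS T hT
    · rw [Measure.map_apply hXtpair MeasurableSet.univ, Set.preimage_univ,
        Measure.compProd_apply_univ, measure_univ, measure_univ]
  have master : ∀ F : 𝒳 × (𝒳 × 𝒳) → ENNReal, Measurable F →
      ∫⁻ ω, F (X t₀ ω, pair ω) ∂ R = ∫⁻ z, ∫⁻ p, F (z, p) ∂(κ z) ∂ν := by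
    intro F hF
    rw [← lintegral_map hF hXtpair, hdis, Measure.lintegral_compProd hF]
    rfl
  have hnormR : ∫⁻ ω, h (pair ω) ∂ R = 1 := by rw [← lintegral_map hh hpairm]; exact hnorm
  set c : 𝒳 → ENNReal := fun z => ∫⁻ p, h p ∂(κ z) with hcdef
  have hcmeas : Measurable c :=
    Measurable.lintegral_kernel_prod_right (κ := κ') (f := fun _ p => h p)
      (by exact hh.comp measurable_snd)
  have hcint : ∫⁻ z, c z ∂ν = 1 := by
    rw [← master (fun q => h q.2) (hh.comp measurable_snd)]; exact hnormR
  have hcfin : ∀ᵐ z ∂ν, c z < ⊤ := ae_lt_top hcmeas (by rw [hcint]; exact ENNReal.one_ne_top)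
  haveI hPprob : IsProbabilityMeasure P := by
    constructor
    rw [hP, withDensity_apply _ MeasurableSet.univ, setLIntegral_univ]
    exact hnormR
  have masterP : ∀ F : 𝒳 × (𝒳 × 𝒳) → ENNReal, Measurable F →
      ∫⁻ ω, F (X t₀ ω, pair ω) ∂P = ∫⁻ z, ∫⁻ p, F (z, p) * h p ∂(κ z) ∂ν := by
    intro F hF
    rw [hP, lintegral_withDensity_eq_lintegral_mul R (f := fun ω => h (X 0 ω, X 1 ω))
      (g := fun ω => F (X t₀ ω, pair ω)) (by exact hh.comp hpairm) (by exact hF.comp hXtpair)]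
    have he : ∫⁻ ω, ((fun ω => h (X 0 ω, X 1 ω)) * fun ω => F (X t₀ ω, pair ω)) ω ∂ R
        = ∫⁻ ω, (fun q => h q.2 * F q) (X t₀ ω, pair ω) ∂ R := rfl
    rw [he, master (fun q => h q.2 * F q) (by exact (hh.comp measurable_snd).mul hF)]
    exact lintegral_congr fun z => lintegral_congr fun p => mul_comm _ _
  -- basic set identities
  have hpreST : ∀ (S : Set 𝒳) (T : Set (𝒳 × 𝒳)),
      (fun ω => (X t₀ ω, pair ω)) ⁻¹' (S ×ˢ T) = pair ⁻¹' T ∩ X t₀ ⁻¹' S := by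
    intro S T; ext ω; exact ⟨fun h' => ⟨h'.2, h'.1⟩, fun h' => ⟨h'.2, h'.1⟩⟩
  have key1R : ∀ S, MeasurableSet S → ∀ T, MeasurableSet T →
      R (pair ⁻¹' T ∩ X t₀ ⁻¹' S) = ∫⁻ z in S, κ z T ∂ν := by
    intro S hS T hT
    have : pair ⁻¹' T ∩ X t₀ ⁻¹' S = {ω | X t₀ ω ∈ S ∧ pair ω ∈ T} := by
      ext ω; exact ⟨fun h' => ⟨h'.2, h'.1⟩, fun h' => ⟨h'.2, h'.1⟩⟩
    rw [this]
    exact hκ S hS T hT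
  set mI : Set (𝒳 × 𝒳) → 𝒳 → ENNReal := fun T z => ∫⁻ p in T, h p ∂(κ z) with hmIdef
  have hmImeas : ∀ T, MeasurableSet T → Measurable (mI T) := by
    intro T hT
    have he : mI T = fun z => ∫⁻ p, T.indicator h p ∂(κ z) := by
      funext z; rw [lintegral_indicator hT]
    rw [he]
    exact Measurable.lintegral_kernel_prod_right (κ := κ') (f := fun _ p => T.indicator h p)
      (by exact (hh.indicator hT).comp measurable_snd)
  have hmIle : ∀ T z, mI T z ≤ c z := fun T z => setLIntegral_le_lintegral _ _
  have key1P : ∀ S, MeasurableSet S → ∀ T, MeasurableSet T →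
      P (pair ⁻¹' T ∩ X t₀ ⁻¹' S) = ∫⁻ z in S, mI T z ∂ν := by
    intro S hS T hT
    have h1 : P (pair ⁻¹' T ∩ X t₀ ⁻¹' S)
        = ∫⁻ ω, (S ×ˢ T).indicator (fun _ => (1:ENNReal)) (X t₀ ω, pair ω) ∂P := by
      rw [← hpreST, ← lintegral_indicator_one (hXtpair (MeasurableSet.prod hS hT))]
      refine lintegral_congr fun ω => ?_
      by_cases hω : (X t₀ ω, pair ω) ∈ S ×ˢ T
      · rw [Set.indicator_of_mem hω,
          Set.indicator_of_mem (show ω ∈ (fun ω => (X t₀ ω, pair ω)) ⁻¹' (S ×ˢ T) from hω)]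
        rfl
      · rw [Set.indicator_of_notMem hω,
          Set.indicator_of_notMem (show ω ∉ (fun ω => (X t₀ ω, pair ω)) ⁻¹' (S ×ˢ T) from hω)]
    rw [h1, masterP _ (measurable_const.indicator (MeasurableSet.prod hS hT))]
    have h2 : ∀ z, ∫⁻ p, (S ×ˢ T).indicator (fun _ => (1:ENNReal)) (z, p) * h p ∂(κ z)
        = S.indicator (mI T) z := by
      intro z
      by_cases hz : z ∈ S
      · rw [Set.indicator_of_mem hz]
        have he : ∀ p, (S ×ˢ T).indicator (fun _ => (1:ENNReal)) (z, p) * h p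
            = T.indicator h p := by
          intro p
          by_cases hp : p ∈ T
          · rw [Set.indicator_of_mem (Set.mk_mem_prod hz hp), one_mul,
              Set.indicator_of_mem hp]
          · rw [Set.indicator_of_notMem (fun hmem => hp hmem.2), zero_mul,
              Set.indicator_of_notMem hp]
        rw [lintegral_congr he, lintegral_indicator hT]
      · rw [Set.indicator_of_notMem hz]
        have he : ∀ p, (S ×ˢ T).indicator (fun _ => (1:ENNReal)) (z, p) * h p = 0 := fun p => by
          rw [Set.indicator_of_notMem (fun hmem => hz hmem.1), zero_mul]
        rw [lintegral_congr he, lintegral_zero]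
    rw [lintegral_congr h2, lintegral_indicator hS]
  -- the time-t₀ marginal of P
  have hν' : P.map (X t₀) = ν.withDensity c := by
    refine Measure.ext fun S hS => ?_
    rw [Measure.map_apply (hX t₀) hS, withDensity_apply _ hS]
    have he : X t₀ ⁻¹' S = pair ⁻¹' Set.univ ∩ X t₀ ⁻¹' S := by simp
    rw [he, key1P S hS _ MeasurableSet.univ]
    refine setLIntegral_congr_fun hS (fun z _ => ?_)
    simp only [hmIdef, Measure.restrict_univ]
    rfl
  -- conditional expectations as functions of X t₀
  have hcondR : ∀ T, MeasurableSet T →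
      R[ind (pair ⁻¹' T) | at1 X t₀] =ᵐ[R] fun ω => (κ (X t₀ ω) T).toReal := by
    intro T hT
    exact condexp_indicator_eq_of_lintegral R (X t₀) (hX t₀) _ (hpairm hT)
      (fun z => κ z T) ((Measure.measurable_coe hT).comp hκmeas)
      (fun z => haveI := hκprob z; prob_le_one)
      (fun S hS => key1R S hS T hT)
  have hψP_le : ∀ T z, mI T z / c z ≤ 1 := fun T z =>
    ENNReal.div_le_of_le_mul (by rw [one_mul]; exact hmIle T z)
  have hcondP : ∀ T, MeasurableSet T →
      P[ind (pair ⁻¹' T) | at1 X t₀] =ᵐ[P] fun ω => (mI T (X t₀ ω) / c (X t₀ ω)).toReal := by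
    intro T hT
    refine condexp_indicator_eq_of_lintegral P (X t₀) (hX t₀) _ (hpairm hT)
      (fun z => mI T z / c z) ((hmImeas T hT).div hcmeas) (hψP_le T) (fun S hS => ?_)
    have hwd := setLIntegral_withDensity_eq_setLIntegral_mul ν hcmeas ((hmImeas T hT).div hcmeas) hS
    simp only [Pi.div_apply] at hwd
    rw [key1P S hS T hT, hν',
      hwd]
    refine lintegral_congr_ae (ae_restrict_of_ae ?_)
    filter_upwards [hcfin] with z hz
    rw [Pi.mul_apply]
    by_cases hc0 : c z = 0
    · have h0 : mI T z = 0 := le_antisymm (hc0 ▸ hmIle T z) zero_le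
      simp [h0, hc0]
    · rw [Pi.div_apply, ENNReal.mul_div_cancel hc0 hz.ne]
  -- window measurability of endpoint events
  have hwin0 : ∀ {A' : Set 𝒳}, MeasurableSet A' →
      MeasurableSet[window X 0 t₀] (X 0 ⁻¹' A') := by
    intro A' hA'
    have hle : MeasurableSpace.comap (X 0) inferInstance ≤ window X 0 t₀ :=
      le_iSup₂ (f := fun r (_ : r ∈ Set.Icc (0:ℝ) t₀) =>
        MeasurableSpace.comap (X r) inferInstance) 0 ⟨le_refl 0, ht₀0.le⟩
    exact hle _ ⟨A', hA', rfl⟩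
  have hwin1 : ∀ {B' : Set 𝒳}, MeasurableSet B' →
      MeasurableSet[window X t₀ 1] (X 1 ⁻¹' B') := by
    intro B' hB'
    have hle : MeasurableSpace.comap (X 1) inferInstance ≤ window X t₀ 1 :=
      le_iSup₂ (f := fun r (_ : r ∈ Set.Icc t₀ (1:ℝ)) =>
        MeasurableSpace.comap (X r) inferInstance) 1 ⟨ht₀1.le, le_refl 1⟩
    exact hle _ ⟨B', hB', rfl⟩
  have hpre0 : ∀ (A' : Set 𝒳), pair ⁻¹' (A' ×ˢ Set.univ) = X 0 ⁻¹' A' := by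
    intro A'; ext ω; simp [hpairdef]
  have hpre1 : ∀ (B' : Set 𝒳), pair ⁻¹' (Set.univ ×ˢ B') = X 1 ⁻¹' B' := by
    intro B'; ext ω; simp [hpairdef]
  have hint : ∀ (A' B' : Set 𝒳),
      pair ⁻¹' (A' ×ˢ Set.univ) ∩ pair ⁻¹' (Set.univ ×ˢ B') = pair ⁻¹' (A' ×ˢ B') := by
    intro A' B'; rw [← Set.preimage_inter, Set.prod_inter_prod]; simp
  -- product rule for κ, from the Markov property of R
  have prodR : ∀ A' B' : Set 𝒳, MeasurableSet A' → MeasurableSet B' →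
      ∀ᵐ z ∂ν, κ z (A' ×ˢ B') = κ z (A' ×ˢ Set.univ) * κ z (Set.univ ×ˢ B') := by
    intro A' B' hA' hB'
    have hmark := hR t₀ ⟨ht₀0.le, ht₀1.le⟩ _ _
      ((hpre0 A') ▸ hwin0 hA') ((hpre1 B') ▸ hwin1 hB')
    rw [hint A' B'] at hmark
    have e1 := hcondR _ (MeasurableSet.prod hA' MeasurableSet.univ)
    have e2 := hcondR _ (MeasurableSet.prod MeasurableSet.univ hB')
    have e3 := hcondR _ (MeasurableSet.prod hA' hB')
    have hae : ∀ᵐ ω ∂ R, (κ (X t₀ ω) (A' ×ˢ B')).toReal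
        = (κ (X t₀ ω) (A' ×ˢ Set.univ)).toReal * (κ (X t₀ ω) (Set.univ ×ˢ B')).toReal := by
      filter_upwards [hmark, e1, e2, e3] with ω h0 h1 h2 h3
      rw [← h3, h0, Pi.mul_apply, h1, h2]
    have hmeasset : MeasurableSet {z | (κ z (A' ×ˢ B')).toReal
        = (κ z (A' ×ˢ Set.univ)).toReal * (κ z (Set.univ ×ˢ B')).toReal} := by
      refine StronglyMeasurable.measurableSet_eq_fun ?_ ?_
      · exact (ENNReal.measurable_toReal.comp
          ((Measure.measurable_coe (MeasurableSet.prod hA' hB')).comp hκmeas)).stronglyMeasurable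
      · exact ((ENNReal.measurable_toReal.comp
          ((Measure.measurable_coe (MeasurableSet.prod hA' MeasurableSet.univ)).comp
            hκmeas)).mul (ENNReal.measurable_toReal.comp
          ((Measure.measurable_coe (MeasurableSet.prod MeasurableSet.univ hB')).comp
            hκmeas))).stronglyMeasurable
    have hνae : ∀ᵐ z ∂ν, (κ z (A' ×ˢ B')).toReal
        = (κ z (A' ×ˢ Set.univ)).toReal * (κ z (Set.univ ×ˢ B')).toReal := by
      rw [hνdef]
      exact (MeasureTheory.ae_map_iff (hX t₀).aemeasurable hmeasset).mpr hae
    filter_upwards [hνae] with z hz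
    haveI := hκprob z
    rw [← ENNReal.toReal_mul] at hz
    exact (ENNReal.toReal_eq_toReal_iff' (measure_ne_top _ _)
      (ENNReal.mul_ne_top (measure_ne_top _ _) (measure_ne_top _ _))).mp hz
  -- product rule for the h-integrals, from the Markov property of P
  have prodP : ∀ A' B' : Set 𝒳, MeasurableSet A' → MeasurableSet B' →
      ∀ᵐ z ∂ν, c z ≠ 0 → c z ≠ ⊤ →
        c z * mI (A' ×ˢ B') z = mI (A' ×ˢ Set.univ) z * mI (Set.univ ×ˢ B') z := by
    intro A' B' hA' hB'
    have hmark := hPMarkov t₀ ⟨ht₀0.le, ht₀1.le⟩ _ _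
      ((hpre0 A') ▸ hwin0 hA') ((hpre1 B') ▸ hwin1 hB')
    rw [hint A' B'] at hmark
    have e1 := hcondP _ (MeasurableSet.prod hA' MeasurableSet.univ)
    have e2 := hcondP _ (MeasurableSet.prod MeasurableSet.univ hB')
    have e3 := hcondP _ (MeasurableSet.prod hA' hB')
    have hae : ∀ᵐ ω ∂P, (mI (A' ×ˢ B') (X t₀ ω) / c (X t₀ ω)).toReal
        = (mI (A' ×ˢ Set.univ) (X t₀ ω) / c (X t₀ ω)).toReal
          * (mI (Set.univ ×ˢ B') (X t₀ ω) / c (X t₀ ω)).toReal := by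
      filter_upwards [hmark, e1, e2, e3] with ω h0 h1 h2 h3
      rw [← h3, h0, Pi.mul_apply, h1, h2]
    have hmeasψ : ∀ T, MeasurableSet T → Measurable fun z => (mI T z / c z).toReal := by
      intro T hT
      exact ENNReal.measurable_toReal.comp ((hmImeas T hT).div hcmeas)
    have hmeasset : MeasurableSet {z | (mI (A' ×ˢ B') z / c z).toReal
        = (mI (A' ×ˢ Set.univ) z / c z).toReal * (mI (Set.univ ×ˢ B') z / c z).toReal} := by
      refine StronglyMeasurable.measurableSet_eq_fun ?_ ?_
      · exact (hmeasψ _ (MeasurableSet.prod hA' hB')).stronglyMeasurable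
      · exact ((hmeasψ _ (MeasurableSet.prod hA' MeasurableSet.univ)).mul
          (hmeasψ _ (MeasurableSet.prod MeasurableSet.univ hB'))).stronglyMeasurable
    have hν'ae : ∀ᵐ z ∂(P.map (X t₀)), (mI (A' ×ˢ B') z / c z).toReal
        = (mI (A' ×ˢ Set.univ) z / c z).toReal * (mI (Set.univ ×ˢ B') z / c z).toReal :=
      (MeasureTheory.ae_map_iff (hX t₀).aemeasurable hmeasset).mpr hae
    -- the exceptional set carries no c-mass
    set E : Set 𝒳 := {z | ¬ ((mI (A' ×ˢ B') z / c z).toReal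
        = (mI (A' ×ˢ Set.univ) z / c z).toReal
          * (mI (Set.univ ×ˢ B') z / c z).toReal)} with hEdef
    have hEmeas : MeasurableSet E := hmeasset.compl
    have hE0 : (ν.withDensity c) E = 0 := by
      rw [← hν']
      exact hν'ae
    have hc0onE : ∀ᵐ z ∂ν, z ∈ E → c z = 0 := by
      rw [withDensity_apply _ hEmeas] at hE0
      exact (setLIntegral_eq_zero_iff hEmeas hcmeas).mp hE0
    filter_upwards [hc0onE] with z hz hc0 hcT
    have hzE : z ∉ E := fun hmem => hc0 (hz hmem)
    have heq : (mI (A' ×ˢ B') z / c z).toReal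
        = (mI (A' ×ˢ Set.univ) z / c z).toReal * (mI (Set.univ ×ˢ B') z / c z).toReal := by
      by_contra hcon; exact hzE hcon
    rw [← ENNReal.toReal_mul] at heq
    have hne : ∀ T, mI T z / c z ≠ ⊤ := fun T =>
      (lt_of_le_of_lt (hψP_le T z) ENNReal.one_lt_top).ne
    have heq2 : mI (A' ×ˢ B') z / c z
        = (mI (A' ×ˢ Set.univ) z / c z) * (mI (Set.univ ×ˢ B') z / c z) :=
      (ENNReal.toReal_eq_toReal_iff' (hne _) (ENNReal.mul_ne_top (hne _) (hne _))).mp heq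
    -- upgrade to the product identity
    have hAB : mI (A' ×ˢ B') z
        = (mI (A' ×ˢ Set.univ) z / c z) * (mI (Set.univ ×ˢ B') z / c z) * c z := by
      rw [← heq2, ENNReal.div_mul_cancel hc0 hcT]
    calc c z * mI (A' ×ˢ B') z
        = (mI (A' ×ˢ Set.univ) z / c z * c z)
          * (mI (Set.univ ×ˢ B') z / c z * c z) := by
          rw [hAB]; ring
      _ = mI (A' ×ˢ Set.univ) z * mI (Set.univ ×ˢ B') z := by
          rw [ENNReal.div_mul_cancel hc0 hcT, ENNReal.div_mul_cancel hc0 hcT]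
  -- countably generated sub-σ-algebra adapted to h
  obtain ⟨gg, hgg, hggh⟩ := exists_cg_of_measurable hh
  have hpm : ∀ F : Finset ℕ, MeasurableSet (piInter gg F) := measurableSet_piInter hgg
  -- choose a good z in 𝒳o
  have hgood : ∀ᵐ z ∂ν, (∀ F F' : Finset ℕ,
        κ z (piInter gg F ×ˢ piInter gg F')
          = κ z (piInter gg F ×ˢ Set.univ) * κ z (Set.univ ×ˢ piInter gg F'))
      ∧ (∀ F F' : Finset ℕ, c z ≠ 0 → c z ≠ ⊤ →
        c z * mI (piInter gg F ×ˢ piInter gg F') z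
          = mI (piInter gg F ×ˢ Set.univ) z * mI (Set.univ ×ˢ piInter gg F') z)
      ∧ c z < ⊤ := by
    refine Filter.Eventually.and ?_ (Filter.Eventually.and ?_ hcfin)
    · rw [MeasureTheory.ae_all_iff]
      intro F
      rw [MeasureTheory.ae_all_iff]
      intro F'
      exact prodR _ _ (hpm F) (hpm F')
    · rw [MeasureTheory.ae_all_iff]
      intro F
      rw [MeasureTheory.ae_all_iff]
      intro F'
      exact prodP _ _ (hpm F) (hpm F')
  obtain ⟨z, hz𝒳o, hzR, hzP, hzfin⟩ : ∃ z, z ∈ 𝒳o ∧ (∀ F F' : Finset ℕ,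
        κ z (piInter gg F ×ˢ piInter gg F')
          = κ z (piInter gg F ×ˢ Set.univ) * κ z (Set.univ ×ˢ piInter gg F'))
      ∧ (∀ F F' : Finset ℕ, c z ≠ 0 → c z ≠ ⊤ →
        c z * mI (piInter gg F ×ˢ piInter gg F') z
          = mI (piInter gg F ×ˢ Set.univ) z * mI (Set.univ ×ˢ piInter gg F') z)
      ∧ c z < ⊤ := by
    by_contra hcon
    have hbad : ν {z | ¬ ((∀ F F' : Finset ℕ,
        κ z (piInter gg F ×ˢ piInter gg F')
          = κ z (piInter gg F ×ˢ Set.univ) * κ z (Set.univ ×ˢ piInter gg F'))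
      ∧ (∀ F F' : Finset ℕ, c z ≠ 0 → c z ≠ ⊤ →
        c z * mI (piInter gg F ×ˢ piInter gg F') z
          = mI (piInter gg F ×ˢ Set.univ) z * mI (Set.univ ×ˢ piInter gg F') z)
      ∧ c z < ⊤)} = 0 := ae_iff.mp hgood
    have hsub : 𝒳o ⊆ {z | ¬ ((∀ F F' : Finset ℕ,
        κ z (piInter gg F ×ˢ piInter gg F')
          = κ z (piInter gg F ×ˢ Set.univ) * κ z (Set.univ ×ˢ piInter gg F'))
      ∧ (∀ F F' : Finset ℕ, c z ≠ 0 → c z ≠ ⊤ →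
        c z * mI (piInter gg F ×ˢ piInter gg F') z
          = mI (piInter gg F ×ˢ Set.univ) z * mI (Set.univ ×ˢ piInter gg F') z)
      ∧ c z < ⊤)} := by
      intro z hz
      simp only [Set.mem_setOf_eq]
      intro hcontra
      exact hcon ⟨z, hz, hcontra⟩
    exact absurd (measure_mono_null hsub hbad) hpos.ne'
  haveI := hκprob z
  -- degenerate case: c z = 0 is impossible-compatible only with ∫ h dμ2 = 0
  rcases eq_or_ne (c z) 0 with hc0 | hc0
  · exfalso
    have hae0 : h =ᵐ[κ z] 0 := (lintegral_eq_zero_iff hh).mp hc0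
    have hμ0 : μ2 {p | ¬ h p = 0} = 0 := habs z hz𝒳o (ae_iff.mp hae0)
    have h0 : ∫⁻ p, h p ∂μ2 = 0 := (lintegral_eq_zero_iff hh).mpr (ae_iff.mpr hμ0)
    rw [hnorm] at h0
    exact one_ne_zero h0
  · obtain ⟨f₀, g₁, hf₀, hg₁, E, hEmeas, hE0, hEq⟩ :=
      transfer_factorization gg hgg h hggh (κ z) (c z) hc0 hzfin.ne rfl hzR
        (fun F F' => hzP F F' hc0 hzfin.ne)
    refine ⟨f₀, g₁, hf₀, hg₁, ?_⟩
    have hμE : μ2 E = 0 := habs z hz𝒳o hE0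
    rw [ae_iff]
    have hsub2 : {ω | ¬ h (X 0 ω, X 1 ω) = f₀ (X 0 ω) * g₁ (X 1 ω)} ⊆ pair ⁻¹' E := by
      intro ω hω
      by_contra hnE
      exact hω (hEq _ hnE)
    refine measure_mono_null hsub2 ?_
    rw [Measure.map_apply hpairm hEmeas] at hμE
    exact hμE
end
end

section
/- Fix a reference probability measure R on path space and marginal constraints μ₀, μ₁ on 𝒳. The dynamical Schrödinger problem — minimize H(P|R) over probability measures P on Ω with P_0 = μ₀ and P_1 = μ₁ — has at most one solution; and if P̂ solves it, then π̂ = P̂_{01} solves the static problem of minimizing H(π|R_{01}) over π on 𝒳² with first marginal μ₀ and second marginal μ₁. Conversely, if π̂ solves the static problem with H(π̂|R_{01}) < ∞, then P̂ = ∫ R^{xy} π̂(dxdy) solves the dynamical problem. -/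
open MeasureTheory

noncomputable section

variable {Ω 𝒳 : Type*}

/-- `B` is an (everywhere-defined, measurable) bridge system for `R`: each `B (x,y)` is a
probability measure pinned at endpoints `(x,y)`, `B` is measurable, and `R` is the mixture of
its bridges with respect to its own endpoint marginal `R_{01}`. -/
def IsBridgeSystem [MeasurableSpace Ω] [MeasurableSpace 𝒳]
    (X : ℝ → Ω → 𝒳) (R : Measure Ω) (B : 𝒳 × 𝒳 → Measure Ω) : Prop :=
  Measurable B ∧ (∀ p, IsProbabilityMeasure (B p)) ∧
  (∀ p : 𝒳 × 𝒳, B p {ω | X 0 ω = p.1 ∧ X 1 ω = p.2} = 1) ∧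
  R = (R.map (fun ω => (X 0 ω, X 1 ω))).bind B

open Classical in
/-- Relative entropy (Kullback-Leibler divergence) `H(p|r) = ∫ log (dp/dr) dp ∈ [0,∞]`,
set to `∞` when `p` is not dominated by `r` or the integral is not defined. -/
def relEnt [MeasurableSpace Ω] (p r : Measure Ω) : ENNReal :=
  if p ≪ r ∧ Integrable (llr p r) p then ENNReal.ofReal (∫ ω, llr p r ω ∂p) else ⊤

/-- `P` solves the dynamical Schrödinger problem: it is a probability measure on path space
with prescribed initial and final marginals `μ₀`, `μ₁`, finite entropy with respect to `R`,
and it minimizes `H(·|R)` among all such measures. -/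
def IsDynSol [MeasurableSpace Ω] [MeasurableSpace 𝒳] (X : ℝ → Ω → 𝒳) (R : Measure Ω)
    (μ₀ μ₁ : Measure 𝒳) (P : Measure Ω) : Prop :=
  IsProbabilityMeasure P ∧ P.map (X 0) = μ₀ ∧ P.map (X 1) = μ₁ ∧ relEnt P R < ⊤ ∧
  ∀ Q : Measure Ω, IsProbabilityMeasure Q → Q.map (X 0) = μ₀ → Q.map (X 1) = μ₁ →
    relEnt P R ≤ relEnt Q R

/-- `π` solves the static Schrödinger problem: it is a probability measure on `𝒳 × 𝒳` with
prescribed marginals `μ₀`, `μ₁`, finite entropy with respect to `R₀₁`, and it minimizes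
`H(·|R₀₁)` among all such measures. -/
def IsStatSol [MeasurableSpace 𝒳] (R01 : Measure (𝒳 × 𝒳))
    (μ₀ μ₁ : Measure 𝒳) (π : Measure (𝒳 × 𝒳)) : Prop :=
  IsProbabilityMeasure π ∧ π.map Prod.fst = μ₀ ∧ π.map Prod.snd = μ₁ ∧ relEnt π R01 < ⊤ ∧
  ∀ ρ : Measure (𝒳 × 𝒳), IsProbabilityMeasure ρ → ρ.map Prod.fst = μ₀ → ρ.map Prod.snd = μ₁ →
    relEnt π R01 ≤ relEnt ρ R01

open scoped ENNReal

section Aux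
variable {α : Type*} [MeasurableSpace α] {p q r : Measure α}

lemma relEnt_eq (h1 : p ≪ r) (h2 : Integrable (llr p r) p) :
    relEnt p r = ENNReal.ofReal (∫ x, llr p r x ∂p) := by
  rw [relEnt, if_pos ⟨h1, h2⟩]

lemma relEnt_of_not (h : ¬(p ≪ r ∧ Integrable (llr p r) p)) : relEnt p r = ⊤ := by
  rw [relEnt, if_neg h]

lemma of_relEnt_ne_top (h : relEnt p r ≠ ⊤) : p ≪ r ∧ Integrable (llr p r) p := by
  by_contra hc; exact h (relEnt_of_not hc)

lemma log_le_div_exp {s : ℝ} (hs : 0 < s) : Real.log s ≤ s / Real.exp 1 := by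
  have h := Real.log_le_sub_one_of_pos (x := s / Real.exp 1) (by positivity)
  rw [Real.log_div hs.ne' (Real.exp_ne_zero 1), Real.log_exp] at h
  linarith

lemma neg_inv_exp_le_mul_log {t : ℝ} (ht : 0 ≤ t) : -(Real.exp 1)⁻¹ ≤ t * Real.log t := by
  rcases eq_or_lt_of_le ht with h0 | h0
  · simp [← h0]
    positivity
  rcases le_total 1 t with h1 | h1
  · have : 0 ≤ t * Real.log t := mul_nonneg ht (Real.log_nonneg h1)
    have : 0 < (Real.exp 1)⁻¹ := by positivity
    linarith
  · have h2 : Real.log t⁻¹ ≤ t⁻¹ / Real.exp 1 := log_le_div_exp (by positivity)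
    have h3 : t * Real.log t⁻¹ ≤ t * (t⁻¹ / Real.exp 1) :=
      mul_le_mul_of_nonneg_left h2 ht
    rw [Real.log_inv] at h3
    have h4 : t * (t⁻¹ / Real.exp 1) = (Real.exp 1)⁻¹ := by
      field_simp
    nlinarith

lemma mul_max_neg_log_le {t : ℝ} (ht : 0 ≤ t) :
    t * max 0 (-Real.log t) ≤ (Real.exp 1)⁻¹ := by
  rcases le_total (-Real.log t) 0 with h | h
  · rw [max_eq_left h]
    simp
    positivity
  · rw [max_eq_right h]
    have := neg_inv_exp_le_mul_log ht
    nlinarith [Real.exp_pos 1]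

lemma integral_llr_nonneg [IsProbabilityMeasure p] [IsProbabilityMeasure r]
    (h1 : p ≪ r) (h2 : Integrable (llr p r) p) : 0 ≤ ∫ x, llr p r x ∂p := by
  have hint : Integrable (fun x => Real.exp (-llr p r x)) p := by
    rw [integrable_congr (exp_neg_llr h1)]
    exact Measure.integrable_toReal_rnDeriv
  have hle : ∫ x, Real.exp (-llr p r x) ∂p ≤ 1 := by
    rw [integral_congr_ae (exp_neg_llr h1)]
    calc ∫ x, (r.rnDeriv p x).toReal ∂p ≤ (r Set.univ).toReal := by
          simpa using
            Measure.setIntegral_toReal_rnDeriv_le (μ := r) (ν := p) (s := Set.univ)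
              (measure_ne_top r _)
      _ = 1 := by simp
  have hpt : ∀ x, 1 - Real.exp (-llr p r x) ≤ llr p r x := fun x => by
    have := Real.add_one_le_exp (-llr p r x); linarith
  have h3 : ∫ x, (1 - Real.exp (-llr p r x)) ∂p ≤ ∫ x, llr p r x ∂p :=
    integral_mono ((integrable_const 1).sub hint) h2 hpt
  rw [integral_sub (integrable_const 1) hint, integral_const] at h3
  simp at h3
  linarith

lemma integrable_max_neg_llr [IsProbabilityMeasure p] [IsProbabilityMeasure r]
    (h1 : p ≪ r) : Integrable (fun x => max 0 (-llr p r x)) p := by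
  have hmeas : Measurable fun x => max 0 (-llr p r x) :=
    measurable_const.max (measurable_llr p r).neg
  refine ⟨hmeas.aestronglyMeasurable,
    (hasFiniteIntegral_iff_ofReal (Filter.Eventually.of_forall fun x => le_max_left _ _)).mpr ?_⟩
  have this1 := lintegral_withDensity_eq_lintegral_mul r (Measure.measurable_rnDeriv p r)
    (ENNReal.measurable_ofReal.comp hmeas)
  simp only [Function.comp] at this1
  rw [Measure.withDensity_rnDeriv_eq p r h1] at this1
  simp only [Pi.zero_apply]
  rw [this1]
  calc ∫⁻ x, (p.rnDeriv r * fun x => ENNReal.ofReal (max 0 (-llr p r x))) x ∂r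
      ≤ ∫⁻ _, ENNReal.ofReal (Real.exp 1)⁻¹ ∂r := by
        refine lintegral_mono_ae ?_
        filter_upwards [Measure.rnDeriv_lt_top p r] with x hx
        simp only [Pi.mul_apply]
        rw [← ENNReal.ofReal_toReal hx.ne, llr, ← ENNReal.ofReal_mul ENNReal.toReal_nonneg]
        exact ENNReal.ofReal_le_ofReal (mul_max_neg_log_le ENNReal.toReal_nonneg)
    _ < ⊤ := by rw [lintegral_const]; simp [ENNReal.mul_lt_top]

end Aux

section Aux2
variable {α : Type*} [MeasurableSpace α] {p q r : Measure α}

lemma mid_mul_log_le {a b : ℝ} (ha : 0 ≤ a) (hb : 0 ≤ b) :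
    ((a+b)/2) * Real.log ((a+b)/2) ≤ (a * Real.log a + b * Real.log b)/2 := by
  have h := Real.convexOn_mul_log.2 (Set.mem_Ici.mpr ha) (Set.mem_Ici.mpr hb)
    (by norm_num : (0:ℝ) ≤ 1/2) (by norm_num : (0:ℝ) ≤ 1/2) (by norm_num)
  simp only [smul_eq_mul] at h
  have e1 : (1/2) * a + (1/2) * b = (a+b)/2 := by ring
  rw [e1] at h
  linarith

lemma mid_mul_log_lt {a b : ℝ} (ha : 0 ≤ a) (hb : 0 ≤ b) (hne : a ≠ b) :
    ((a+b)/2) * Real.log ((a+b)/2) < (a * Real.log a + b * Real.log b)/2 := by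
  have h := Real.strictConvexOn_mul_log.2 (Set.mem_Ici.mpr ha) (Set.mem_Ici.mpr hb) hne
    (by norm_num : (0:ℝ) < 1/2) (by norm_num : (0:ℝ) < 1/2) (by norm_num)
  simp only [smul_eq_mul] at h
  have e1 : (1/2) * a + (1/2) * b = (a+b)/2 := by ring
  rw [e1] at h
  linarith

end Aux2

section Aux3
variable {α : Type*} [MeasurableSpace α] {p q r : Measure α}

lemma abs_mid_mul_log_le {a b : ℝ} (ha : 0 ≤ a) (hb : 0 ≤ b) :
    |((a+b)/2) * Real.log ((a+b)/2)| ≤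
      (a * Real.log a + b * Real.log b)/2 + 2 * (Real.exp 1)⁻¹ := by
  have h1 := mid_mul_log_le ha hb
  have h2 := neg_inv_exp_le_mul_log (by positivity : (0:ℝ) ≤ (a+b)/2)
  have h3 := neg_inv_exp_le_mul_log ha
  have h4 := neg_inv_exp_le_mul_log hb
  rcases abs_cases (((a+b)/2) * Real.log ((a+b)/2)) with ⟨he, _⟩ | ⟨he, _⟩ <;> rw [he] <;>
    nlinarith [Real.exp_pos 1, inv_pos.mpr (Real.exp_pos 1)]

lemma eq_of_relEnt_midpoint [IsProbabilityMeasure p] [IsProbabilityMeasure q]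
    [IsProbabilityMeasure r]
    (hp : p ≪ r) (hq : q ≪ r) (hpI : Integrable (llr p r) p) (hqI : Integrable (llr q r) q)
    (heq : relEnt p r = relEnt q r)
    (hmin : relEnt p r ≤ relEnt ((2⁻¹ : ℝ≥0∞) • p + (2⁻¹ : ℝ≥0∞) • q) r) : p = q := by
  set m : Measure α := (2⁻¹ : ℝ≥0∞) • p + (2⁻¹ : ℝ≥0∞) • q with hm_def
  haveI hfin_p : IsFiniteMeasure ((2⁻¹ : ℝ≥0∞) • p) := by
    constructor
    simp [ENNReal.inv_lt_top, measure_univ]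
  haveI hfin_q : IsFiniteMeasure ((2⁻¹ : ℝ≥0∞) • q) := by
    constructor
    simp [ENNReal.inv_lt_top, measure_univ]
  haveI hmprob : IsProbabilityMeasure m := by
    constructor
    simp only [hm_def, Measure.add_apply, Measure.smul_apply, smul_eq_mul, measure_univ, mul_one]
    exact ENNReal.inv_two_add_inv_two
  have hm : m ≪ r := by
    refine Measure.AbsolutelyContinuous.mk fun s hs hrs => ?_
    simp [hm_def, Measure.add_apply, Measure.smul_apply, hp hrs, hq hrs]
  set F : α → ℝ := fun x => (p.rnDeriv r x).toReal with hF_def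
  set G : α → ℝ := fun x => (q.rnDeriv r x).toReal with hG_def
  set Hm : α → ℝ := fun x => (m.rnDeriv r x).toReal with hH_def
  have hFmeas : Measurable F := (Measure.measurable_rnDeriv p r).ennreal_toReal
  have hGmeas : Measurable G := (Measure.measurable_rnDeriv q r).ennreal_toReal
  -- density of the midpoint
  have hdens : Hm =ᵐ[r] fun x => (F x + G x)/2 := by
    have h1 := Measure.rnDeriv_add ((2⁻¹ : ℝ≥0∞) • p) ((2⁻¹ : ℝ≥0∞) • q) r
    have h2 := Measure.rnDeriv_smul_left_of_ne_top p r (show (2⁻¹ : ℝ≥0∞) ≠ ⊤ by simp)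
    have h3 := Measure.rnDeriv_smul_left_of_ne_top q r (show (2⁻¹ : ℝ≥0∞) ≠ ⊤ by simp)
    filter_upwards [h1, h2, h3, Measure.rnDeriv_lt_top p r, Measure.rnDeriv_lt_top q r]
      with x h1 h2 h3 h4 h5
    simp only [hH_def, hm_def, h1, Pi.add_apply, h2, h3, Pi.smul_apply, smul_eq_mul]
    rw [ENNReal.toReal_add (by finiteness) (by finiteness), ENNReal.toReal_mul,
      ENNReal.toReal_mul]
    simp only [hF_def, hG_def]
    rw [ENNReal.toReal_inv]
    norm_num
    ring
  -- integral conversions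
  have hIp : ∫ x, F x * Real.log (F x) ∂r = ∫ x, llr p r x ∂p := by
    simpa [smul_eq_mul, llr, hF_def] using integral_rnDeriv_smul hp (f := llr p r)
  have hIq : ∫ x, G x * Real.log (G x) ∂r = ∫ x, llr q r x ∂q := by
    simpa [smul_eq_mul, llr, hG_def] using integral_rnDeriv_smul hq (f := llr q r)
  have hIF : Integrable (fun x => F x * Real.log (F x)) r := by
    simpa [smul_eq_mul, llr, hF_def] using (integrable_rnDeriv_smul_iff hp (f := llr p r)).mpr hpI
  have hIG : Integrable (fun x => G x * Real.log (G x)) r := by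
    simpa [smul_eq_mul, llr, hG_def] using (integrable_rnDeriv_smul_iff hq (f := llr q r)).mpr hqI
  have hFpos : ∀ x, 0 ≤ F x := fun x => ENNReal.toReal_nonneg
  have hGpos : ∀ x, 0 ≤ G x := fun x => ENNReal.toReal_nonneg
  -- integrability of the midpoint entropy integrand
  have hint2 : Integrable (fun x => (F x * Real.log (F x) + G x * Real.log (G x))/2) r :=
    (hIF.add hIG).div_const 2
  have hIφM : Integrable (fun x => ((F x + G x)/2) * Real.log ((F x + G x)/2)) r := by
    refine Integrable.mono' (hint2.add (integrable_const (2 * (Real.exp 1)⁻¹)))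
      ((Real.continuous_mul_log.measurable.comp
        ((hFmeas.add hGmeas).div_const 2)).aestronglyMeasurable)
      (Filter.Eventually.of_forall fun x => ?_)
    exact abs_mid_mul_log_le (hFpos x) (hGpos x)
  have hIH : Integrable (fun x => Hm x * Real.log (Hm x)) r := by
    refine hIφM.congr ?_
    filter_upwards [hdens] with x hx
    rw [hx]
  have hmI : Integrable (llr m r) m := by
    refine (integrable_rnDeriv_smul_iff hm (f := llr m r)).mp ?_
    simpa [smul_eq_mul, llr, hH_def] using hIH
  have hIm : ∫ x, Hm x * Real.log (Hm x) ∂r = ∫ x, llr m r x ∂m := by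
    simpa [smul_eq_mul, llr, hH_def] using integral_rnDeriv_smul hm (f := llr m r)
  -- real values
  have ha0 : 0 ≤ ∫ x, llr p r x ∂p := integral_llr_nonneg hp hpI
  have hb0 : 0 ≤ ∫ x, llr q r x ∂q := integral_llr_nonneg hq hqI
  have hc0 : 0 ≤ ∫ x, llr m r x ∂m := integral_llr_nonneg hm hmI
  rw [relEnt_eq hp hpI, relEnt_eq hq hqI] at heq
  rw [relEnt_eq hp hpI, relEnt_eq hm hmI] at hmin
  have heq' : ∫ x, llr p r x ∂p = ∫ x, llr q r x ∂q := by
    rw [ENNReal.ofReal_eq_ofReal_iff ha0 hb0] at heq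
    exact heq
  have hmin' : ∫ x, llr p r x ∂p ≤ ∫ x, llr m r x ∂m :=
    (ENNReal.ofReal_le_ofReal_iff hc0).mp hmin
  -- the nonnegative convexity defect has zero integral
  set ψ : α → ℝ := fun x => (F x * Real.log (F x) + G x * Real.log (G x))/2
      - ((F x + G x)/2) * Real.log ((F x + G x)/2) with hψ_def
  have hψ_nonneg : ∀ x, 0 ≤ ψ x := fun x =>
    sub_nonneg.mpr (mid_mul_log_le (hFpos x) (hGpos x))
  have hψ_int : Integrable ψ r := hint2.sub hIφM
  have hψ_zero : ∫ x, ψ x ∂r = 0 := by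
    have hInt_mid : ∫ x, ((F x + G x)/2) * Real.log ((F x + G x)/2) ∂r
        = ∫ x, llr m r x ∂m := by
      rw [← hIm]
      refine integral_congr_ae ?_
      filter_upwards [hdens] with x hx
      rw [hx]
    have hsplit : ∫ x, ψ x ∂r
        = (∫ x, F x * Real.log (F x) ∂r + ∫ x, G x * Real.log (G x) ∂r)/2
          - ∫ x, ((F x + G x)/2) * Real.log ((F x + G x)/2) ∂r := by
      rw [hψ_def]
      rw [integral_sub hint2 hIφM, integral_div, integral_add hIF hIG]
    rw [hsplit, hInt_mid, hIp, hIq]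
    have h1 : 0 ≤ ∫ x, ψ x ∂r := integral_nonneg hψ_nonneg
    rw [hsplit, hInt_mid, hIp, hIq] at h1
    linarith
  have hψ_ae : ψ =ᵐ[r] 0 :=
    (integral_eq_zero_iff_of_nonneg hψ_nonneg hψ_int).mp hψ_zero
  have hFG : F =ᵐ[r] G := by
    filter_upwards [hψ_ae] with x hx
    by_contra hne
    have := mid_mul_log_lt (hFpos x) (hGpos x) hne
    have : 0 < ψ x := sub_pos.mpr this
    simp only [Pi.zero_apply] at hx
    linarith
  have hfg : p.rnDeriv r =ᵐ[r] q.rnDeriv r := by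
    filter_upwards [hFG, Measure.rnDeriv_lt_top p r, Measure.rnDeriv_lt_top q r]
      with x h1 h2 h3
    exact (ENNReal.toReal_eq_toReal_iff' h2.ne h3.ne).mp h1
  calc p = r.withDensity (p.rnDeriv r) := (Measure.withDensity_rnDeriv_eq p r hp).symm
    _ = r.withDensity (q.rnDeriv r) := withDensity_congr_ae hfg
    _ = q := Measure.withDensity_rnDeriv_eq q r hq

end Aux3

section Aux4
open MeasureTheory
open scoped ENNReal

lemma ennreal_mul_inv_le (a b : ℝ≥0∞) : a * (b * a⁻¹) ≤ b := by
  rw [mul_left_comm]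
  rcases eq_or_ne a 0 with h | h
  · simp [h]
  rcases eq_or_ne a ⊤ with h' | h'
  · simp [h']
  · rw [ENNReal.mul_inv_cancel h h', mul_one]

variable {α β : Type*} [MeasurableSpace α] [MeasurableSpace β]
  {p r : Measure α} {T : α → β}

lemma integral_llr_map_le [IsProbabilityMeasure p] [IsProbabilityMeasure r]
    (hT : Measurable T) (hp : p ≪ r) (hpI : Integrable (llr p r) p) :
    Integrable (llr (p.map T) (r.map T)) (p.map T) ∧
      ∫ y, llr (p.map T) (r.map T) y ∂(p.map T) ≤ ∫ x, llr p r x ∂p := by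
  haveI : IsProbabilityMeasure (p.map T) := Measure.isProbabilityMeasure_map hT.aemeasurable
  haveI : IsProbabilityMeasure (r.map T) := Measure.isProbabilityMeasure_map hT.aemeasurable
  have hpt : p.map T ≪ r.map T := hp.map hT
  set g : β → ℝ≥0∞ := (p.map T).rnDeriv (r.map T) with hg_def
  set f : α → ℝ≥0∞ := p.rnDeriv r with hf_def
  have hg_meas : Measurable g := Measure.measurable_rnDeriv _ _
  have hf_meas : Measurable f := Measure.measurable_rnDeriv _ _
  have hf_pos : ∀ᵐ x ∂p, 0 < f x := Measure.rnDeriv_pos hp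
  have hf_lt : ∀ᵐ x ∂p, f x < ⊤ := hp.ae_le (Measure.rnDeriv_lt_top p r)
  have hg_posT : ∀ᵐ x ∂p, 0 < g (T x) := by
    have h1 : ∀ᵐ y ∂(p.map T), 0 < g y := Measure.rnDeriv_pos hpt
    exact (ae_map_iff hT.aemeasurable (measurableSet_lt measurable_const hg_meas)).mp h1
  have hg_ltT : ∀ᵐ x ∂p, g (T x) < ⊤ := by
    have h1 : ∀ᵐ y ∂(p.map T), g y < ⊤ := hpt.ae_le (Measure.rnDeriv_lt_top _ _)
    exact (ae_map_iff hT.aemeasurable (measurableSet_lt hg_meas measurable_const)).mp h1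
  set LG : α → ℝ := fun x => Real.log (g (T x)).toReal with hLG_def
  have hLG_meas : Measurable LG := (hg_meas.comp hT).ennreal_toReal.log
  -- the ratio function
  set w : α → ℝ≥0∞ := fun x => g (T x) * (f x)⁻¹ with hw_def
  have hw_meas : Measurable w := (hg_meas.comp hT).mul hf_meas.inv
  have hw_lint : ∫⁻ x, w x ∂p ≤ 1 := by
    have h := lintegral_withDensity_eq_lintegral_mul r hf_meas hw_meas
    rw [Measure.withDensity_rnDeriv_eq p r hp] at h
    rw [h]
    calc ∫⁻ x, (f * w) x ∂r ≤ ∫⁻ x, g (T x) ∂r :=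
          lintegral_mono fun x => ennreal_mul_inv_le (f x) (g (T x))
      _ = ∫⁻ y, g y ∂(r.map T) := (lintegral_map hg_meas hT).symm
      _ = (p.map T) Set.univ := Measure.lintegral_rnDeriv hpt
      _ = 1 := measure_univ
  have hw_lt : ∀ᵐ x ∂p, w x < ⊤ := by
    filter_upwards [hf_pos, hg_ltT] with x h1 h2
    exact ENNReal.mul_lt_top h2 (ENNReal.inv_lt_top.mpr h1)
  have hwR_int : Integrable (fun x => (w x).toReal) p :=
    integrable_toReal_of_lintegral_ne_top hw_meas.aemeasurable
      (lt_of_le_of_lt hw_lint ENNReal.one_lt_top).ne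
  have hwR_le : ∫ x, (w x).toReal ∂p ≤ 1 := by
    rw [integral_toReal hw_meas.aemeasurable hw_lt]
    calc (∫⁻ x, w x ∂p).toReal ≤ (1 : ℝ≥0∞).toReal :=
          ENNReal.toReal_mono ENNReal.one_ne_top hw_lint
      _ = 1 := by simp
  set v : α → ℝ := fun x => (w x).toReal - 1 with hv_def
  have hv_int : Integrable v p := hwR_int.sub (integrable_const 1)
  have hv_le : ∫ x, v x ∂p ≤ 0 := by
    rw [hv_def]
    rw [integral_sub hwR_int (integrable_const 1), integral_const]
    simp only [measure_univ, probReal_univ, smul_eq_mul, one_mul, mul_one]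
    linarith
  -- pointwise inequality
  have hpt_ineq : ∀ᵐ x ∂p, LG x - llr p r x ≤ v x := by
    filter_upwards [hf_pos, hf_lt, hg_posT, hg_ltT] with x h1 h2 h3 h4
    have ha : 0 < (g (T x)).toReal := ENNReal.toReal_pos h3.ne' h4.ne
    have hb : 0 < (f x).toReal := ENNReal.toReal_pos h1.ne' h2.ne
    have e1 : LG x - llr p r x = Real.log ((g (T x)).toReal / (f x).toReal) := by
      rw [Real.log_div ha.ne' hb.ne']
      rfl
    have e2 : v x = (g (T x)).toReal / (f x).toReal - 1 := by
      rw [hv_def, hw_def]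
      simp only
      rw [ENNReal.toReal_mul, ENNReal.toReal_inv]
      ring_nf
    rw [e1, e2]
    exact Real.log_le_sub_one_of_pos (div_pos ha hb)
  -- negative part of LG is integrable
  have hneg : Integrable (fun y => max 0 (-llr (p.map T) (r.map T) y)) (p.map T) :=
    integrable_max_neg_llr hpt
  have hnegT : Integrable (fun x => max 0 (-LG x)) p := by
    have := (integrable_map_measure
      (measurable_const.max (measurable_llr _ _).neg).aestronglyMeasurable
      hT.aemeasurable).mp hneg
    exact this
  -- LG is integrable
  have hLG_int : Integrable LG p := by
    refine Integrable.mono' ((hpI.abs.add hv_int.abs).add hnegT)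
      hLG_meas.aestronglyMeasurable ?_
    filter_upwards [hpt_ineq] with x hx
    simp only [Pi.add_apply, Real.norm_eq_abs]
    rcases le_total 0 (LG x) with h | h
    · rw [abs_of_nonneg h]
      have h1 : LG x ≤ llr p r x + v x := by linarith
      have h2 : llr p r x + v x ≤ |llr p r x| + |v x| :=
        add_le_add (le_abs_self _) (le_abs_self _)
      have h3 : (0 : ℝ) ≤ max 0 (-LG x) := le_max_left _ _
      linarith
    · rw [abs_of_nonpos h]
      have h1 : -LG x ≤ max 0 (-LG x) := le_max_right _ _
      have h2 : (0:ℝ) ≤ |llr p r x| + |v x| := by positivity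
      linarith
  have hI1 : Integrable (llr (p.map T) (r.map T)) (p.map T) := by
    refine (integrable_map_measure (measurable_llr _ _).aestronglyMeasurable
      hT.aemeasurable).mpr ?_
    exact hLG_int
  refine ⟨hI1, ?_⟩
  have hI2 : ∫ y, llr (p.map T) (r.map T) y ∂(p.map T) = ∫ x, LG x ∂p := by
    rw [integral_map hT.aemeasurable (measurable_llr _ _).aestronglyMeasurable]
    rfl
  have hmono : ∫ x, (LG x - llr p r x) ∂p ≤ ∫ x, v x ∂p :=
    integral_mono_ae (hLG_int.sub hpI) hv_int hpt_ineq
  rw [integral_sub hLG_int hpI] at hmono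
  rw [hI2]
  linarith

lemma relEnt_map_le [IsProbabilityMeasure p] [IsProbabilityMeasure r] (hT : Measurable T) :
    relEnt (p.map T) (r.map T) ≤ relEnt p r := by
  by_cases h : p ≪ r ∧ Integrable (llr p r) p
  · obtain ⟨h1, h2⟩ := h
    obtain ⟨hI, hle⟩ := integral_llr_map_le hT h1 h2
    rw [relEnt_eq h1 h2, relEnt_eq (h1.map hT) hI]
    exact ENNReal.ofReal_le_ofReal hle
  · rw [relEnt_of_not h]
    exact le_top

end Aux4
section Aux5
open MeasureTheory
open scoped ENNReal

variable {Ω 𝒴 : Type*} [MeasurableSpace Ω] [MeasurableSpace 𝒴]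
  {T : Ω → 𝒴} {B : 𝒴 → Measure Ω} {π : Measure 𝒴} {R : Measure Ω}

lemma bridge_preimage (hBp : ∀ q, IsProbabilityMeasure (B q))
    (hpin : ∀ q, B q (T ⁻¹' {q}) = 1) (hT : Measurable T)
    {s : Set 𝒴} (hs : MeasurableSet s) (q : 𝒴) :
    B q (T ⁻¹' s) = s.indicator 1 q := by
  haveI := hBp q
  by_cases hq : q ∈ s
  · have h1 : T ⁻¹' {q} ⊆ T ⁻¹' s := Set.preimage_mono (by simpa using hq)
    have h2 : (1 : ℝ≥0∞) ≤ B q (T ⁻¹' s) := (hpin q) ▸ measure_mono h1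
    have h3 : B q (T ⁻¹' s) ≤ 1 := prob_le_one
    simp [Set.indicator_of_mem hq, le_antisymm h3 h2]
  · have h1 : T ⁻¹' {q} ⊆ (T ⁻¹' s)ᶜ := by
      intro ω hω
      simp only [Set.mem_preimage, Set.mem_singleton_iff] at hω
      simp [Set.mem_preimage, hω, hq]
    have h2 : (1 : ℝ≥0∞) ≤ B q ((T ⁻¹' s)ᶜ) := (hpin q) ▸ measure_mono h1
    rw [measure_compl (hT hs) (measure_ne_top _ _), measure_univ] at h2
    have h0 : B q (T ⁻¹' s) = 0 := by
      by_contra h0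
      have := ENNReal.sub_lt_self (a := (1:ℝ≥0∞)) (b := B q (T ⁻¹' s))
        (by simp) (by simp) h0
      exact absurd (lt_of_le_of_lt h2 this) (lt_irrefl _)
    simp [Set.indicator_of_notMem hq, h0]

lemma bridge_comp_ae (hBp : ∀ q, IsProbabilityMeasure (B q))
    (hpin : ∀ q, B q (T ⁻¹' {q}) = 1) (hT : Measurable T) (q : 𝒴)
    {h : 𝒴 → ℝ≥0∞} (hh : Measurable h) :
    ∀ᵐ ω ∂(B q), h (T ω) = h q := by
  haveI := hBp q
  have hE : MeasurableSet {ω | h (T ω) = h q} :=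
    (hh.comp hT) (measurableSet_singleton (h q))
  have hsub : T ⁻¹' {q} ⊆ {ω | h (T ω) = h q} := by
    intro ω hω
    simp only [Set.mem_preimage, Set.mem_singleton_iff] at hω
    simp [hω]
  have h2 : (1 : ℝ≥0∞) ≤ B q {ω | h (T ω) = h q} := (hpin q) ▸ measure_mono hsub
  have h3 : B q {ω | h (T ω) = h q} = 1 := le_antisymm prob_le_one h2
  rw [ae_iff]
  have : {ω | ¬ h (T ω) = h q} = {ω | h (T ω) = h q}ᶜ := rfl
  rw [this, measure_compl hE (measure_ne_top _ _), measure_univ, h3, tsub_self]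

lemma bridge_bind_prob (hBm : Measurable B) (hBp : ∀ q, IsProbabilityMeasure (B q))
    [IsProbabilityMeasure π] : IsProbabilityMeasure (π.bind B) := by
  constructor
  rw [Measure.bind_apply MeasurableSet.univ hBm.aemeasurable]
  have : ∀ q, B q Set.univ = 1 := fun q => (hBp q).measure_univ
  simp [this]

lemma bridge_bind_map (hBm : Measurable B) (hBp : ∀ q, IsProbabilityMeasure (B q))
    (hpin : ∀ q, B q (T ⁻¹' {q}) = 1) (hT : Measurable T) :
    (π.bind B).map T = π := by
  ext s hs
  rw [Measure.map_apply hT hs, Measure.bind_apply (hT hs) hBm.aemeasurable]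
  calc ∫⁻ q, B q (T ⁻¹' s) ∂π = ∫⁻ q, s.indicator 1 q ∂π :=
        lintegral_congr fun q => bridge_preimage hBp hpin hT hs q
    _ = π s := by
        rw [lintegral_indicator_one hs]

lemma bridge_bind_withDensity {ν : Measure 𝒴} [SigmaFinite ν] [SigmaFinite π]
    (hBm : Measurable B) (hBp : ∀ q, IsProbabilityMeasure (B q))
    (hpin : ∀ q, B q (T ⁻¹' {q}) = 1) (hT : Measurable T)
    (hR : R = ν.bind B) (hac : π ≪ ν) :
    π.bind B = R.withDensity (fun ω => π.rnDeriv ν (T ω)) := by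
  have hf : Measurable (π.rnDeriv ν) := Measure.measurable_rnDeriv _ _
  ext s hs
  have hcoe : Measurable fun q => B q s := (Measure.measurable_coe hs).comp hBm
  -- LHS
  have hlhs : (π.bind B) s = ∫⁻ q, π.rnDeriv ν q * B q s ∂ν := by
    rw [Measure.bind_apply hs hBm.aemeasurable]
    have h := lintegral_withDensity_eq_lintegral_mul ν hf hcoe
    rw [Measure.withDensity_rnDeriv_eq π ν hac] at h
    rw [h]
    rfl
  -- RHS
  have hmeasfT : Measurable fun ω => π.rnDeriv ν (T ω) := hf.comp hT
  have hrhs : R.withDensity (fun ω => π.rnDeriv ν (T ω)) s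
      = ∫⁻ q, π.rnDeriv ν q * B q s ∂ν := by
    rw [withDensity_apply _ hs, hR]
    rw [← lintegral_indicator hs]
    rw [Measure.lintegral_bind hBm.aemeasurable (hmeasfT.indicator hs).aemeasurable]
    refine lintegral_congr fun q => ?_
    have hae := bridge_comp_ae hBp hpin hT q hf
    have : ∫⁻ ω, s.indicator (fun ω => π.rnDeriv ν (T ω)) ω ∂(B q)
        = ∫⁻ ω, s.indicator (fun _ => π.rnDeriv ν q) ω ∂(B q) := by
      refine lintegral_congr_ae ?_
      filter_upwards [hae] with ω hω
      by_cases hmem : ω ∈ s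
      · rw [Set.indicator_of_mem hmem, Set.indicator_of_mem hmem, hω]
      · rw [Set.indicator_of_notMem hmem, Set.indicator_of_notMem hmem]
    rw [this, lintegral_indicator hs, setLIntegral_const]
  rw [hlhs, hrhs]

lemma bridge_relEnt {ν : Measure 𝒴} [IsProbabilityMeasure ν] [IsProbabilityMeasure π]
    [IsProbabilityMeasure R]
    (hBm : Measurable B) (hBp : ∀ q, IsProbabilityMeasure (B q))
    (hpin : ∀ q, B q (T ⁻¹' {q}) = 1) (hT : Measurable T)
    (hR : R = ν.bind B) (hac : π ≪ ν) :
    relEnt (π.bind B) R = relEnt π ν := by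
  set f := π.rnDeriv ν with hf_def
  have hf : Measurable f := Measure.measurable_rnDeriv _ _
  set P := π.bind B with hP_def
  haveI : IsProbabilityMeasure P := bridge_bind_prob hBm hBp
  have hPd : P = R.withDensity (fun ω => f (T ω)) :=
    bridge_bind_withDensity hBm hBp hpin hT hR hac
  have hPac : P ≪ R := hPd ▸ withDensity_absolutelyContinuous R _
  have hPmap : P.map T = π := bridge_bind_map hBm hBp hpin hT
  have hdens : P.rnDeriv R =ᵐ[R] fun ω => f (T ω) := by
    rw [hPd]
    exact Measure.rnDeriv_withDensity R (hf.comp hT)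
  have hllr : llr P R =ᵐ[P] fun ω => llr π ν (T ω) := by
    filter_upwards [hPac.ae_le hdens] with ω hω
    rw [llr, hω]
    rfl
  have hint : Integrable (llr P R) P ↔ Integrable (llr π ν) π := by
    rw [integrable_congr hllr, ← hPmap,
      integrable_map_measure (measurable_llr _ _).aestronglyMeasurable hT.aemeasurable]
    rfl
  have hIeq : ∫ ω, llr P R ω ∂P = ∫ q, llr π ν q ∂π := by
    rw [integral_congr_ae hllr, ← hPmap,
      integral_map hT.aemeasurable (measurable_llr _ _).aestronglyMeasurable]
  by_cases hi : Integrable (llr π ν) π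
  · rw [relEnt_eq hPac (hint.mpr hi), relEnt_eq hac hi, hIeq]
  · rw [relEnt_of_not (fun hc => hi (hint.mp hc.2)), relEnt_of_not (fun hc => hi hc.2)]

end Aux5

lemma midpoint_prob {α : Type*} [MeasurableSpace α] (p q : Measure α)
    [IsProbabilityMeasure p] [IsProbabilityMeasure q] :
    IsProbabilityMeasure ((2⁻¹ : ℝ≥0∞) • p + (2⁻¹ : ℝ≥0∞) • q) := by
  constructor
  simp only [Measure.add_apply, Measure.smul_apply, smul_eq_mul, measure_univ, mul_one]
  exact ENNReal.inv_two_add_inv_two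

lemma midpoint_map {α β : Type*} [MeasurableSpace α] [MeasurableSpace β] (p q : Measure α)
    {f : α → β} (hf : Measurable f) {μ : Measure β} (hp : p.map f = μ) (hq : q.map f = μ) :
    ((2⁻¹ : ℝ≥0∞) • p + (2⁻¹ : ℝ≥0∞) • q).map f = μ := by
  rw [Measure.map_add _ _ hf, Measure.map_smul, Measure.map_smul, hp, hq, ← add_smul,
    ENNReal.inv_two_add_inv_two, one_smul]

/-- the dynamical and static Schrödinger problems have at most one solution
each; the endpoint marginal of a dynamical solution solves the static problem, and conversely
the mixture of the bridges of `R` by a static solution solves the dynamical problem. -/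
theorem schroedinger_problem
    [MeasurableSpace Ω] [MeasurableSpace 𝒳]
    (X : ℝ → Ω → 𝒳) (hX : ∀ t, Measurable (X t))
    (R : Measure Ω) [IsProbabilityMeasure R]
    (B : 𝒳 × 𝒳 → Measure Ω) (hB : IsBridgeSystem X R B)
    (μ₀ μ₁ : Measure 𝒳) [IsProbabilityMeasure μ₀] [IsProbabilityMeasure μ₁] :
    (∀ P₁ P₂ : Measure Ω, IsDynSol X R μ₀ μ₁ P₁ → IsDynSol X R μ₀ μ₁ P₂ → P₁ = P₂) ∧
    (∀ π₁ π₂ : Measure (𝒳 × 𝒳),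
      IsStatSol (R.map (fun ω => (X 0 ω, X 1 ω))) μ₀ μ₁ π₁ →
      IsStatSol (R.map (fun ω => (X 0 ω, X 1 ω))) μ₀ μ₁ π₂ → π₁ = π₂) ∧
    (∀ P : Measure Ω, IsDynSol X R μ₀ μ₁ P →
      IsStatSol (R.map (fun ω => (X 0 ω, X 1 ω))) μ₀ μ₁
        (P.map (fun ω => (X 0 ω, X 1 ω)))) ∧
    (∀ π : Measure (𝒳 × 𝒳),
      IsStatSol (R.map (fun ω => (X 0 ω, X 1 ω))) μ₀ μ₁ π →
      IsDynSol X R μ₀ μ₁ (π.bind B)) := by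
  classical
  set T : Ω → 𝒳 × 𝒳 := fun ω => (X 0 ω, X 1 ω) with hT_def
  have hT : Measurable T := (hX 0).prodMk (hX 1)
  set RT : Measure (𝒳 × 𝒳) := R.map T with hRT_def
  haveI : IsProbabilityMeasure RT := Measure.isProbabilityMeasure_map hT.aemeasurable
  obtain ⟨hBm, hBp, hBpin, hRbind⟩ := hB
  have hpin : ∀ q, B q (T ⁻¹' {q}) = 1 := by
    intro q
    have hset : T ⁻¹' {q} = {ω | X 0 ω = q.1 ∧ X 1 ω = q.2} := by
      ext ω
      simp [hT_def, Prod.ext_iff]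
    rw [hset]
    exact hBpin q
  have hRbind' : R = RT.bind B := hRbind
  have hmap0 : ∀ Q : Measure Ω, (Q.map T).map Prod.fst = Q.map (X 0) := fun Q => by
    rw [Measure.map_map measurable_fst hT]
    rfl
  have hmap1 : ∀ Q : Measure Ω, (Q.map T).map Prod.snd = Q.map (X 1) := fun Q => by
    rw [Measure.map_map measurable_snd hT]
    rfl
  refine ⟨?_, ?_, ?_, ?_⟩
  · -- uniqueness of dynamical solutions
    rintro P₁ P₂ ⟨h1p, h10, h11, h1f, h1min⟩ ⟨h2p, h20, h21, h2f, h2min⟩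
    haveI := h1p; haveI := h2p
    obtain ⟨hac1, hint1⟩ := of_relEnt_ne_top h1f.ne
    obtain ⟨hac2, hint2⟩ := of_relEnt_ne_top h2f.ne
    have heq : relEnt P₁ R = relEnt P₂ R :=
      le_antisymm (h1min P₂ h2p h20 h21) (h2min P₁ h1p h10 h11)
    haveI hm : IsProbabilityMeasure ((2⁻¹ : ℝ≥0∞) • P₁ + (2⁻¹ : ℝ≥0∞) • P₂) :=
      midpoint_prob P₁ P₂
    exact eq_of_relEnt_midpoint hac1 hac2 hint1 hint2 heq
      (h1min _ hm (midpoint_map P₁ P₂ (hX 0) h10 h20) (midpoint_map P₁ P₂ (hX 1) h11 h21))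
  · -- uniqueness of static solutions
    rintro π₁ π₂ ⟨h1p, h10, h11, h1f, h1min⟩ ⟨h2p, h20, h21, h2f, h2min⟩
    haveI := h1p; haveI := h2p
    obtain ⟨hac1, hint1⟩ := of_relEnt_ne_top h1f.ne
    obtain ⟨hac2, hint2⟩ := of_relEnt_ne_top h2f.ne
    have heq : relEnt π₁ RT = relEnt π₂ RT :=
      le_antisymm (h1min π₂ h2p h20 h21) (h2min π₁ h1p h10 h11)
    haveI hm : IsProbabilityMeasure ((2⁻¹ : ℝ≥0∞) • π₁ + (2⁻¹ : ℝ≥0∞) • π₂) :=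
      midpoint_prob π₁ π₂
    exact eq_of_relEnt_midpoint hac1 hac2 hint1 hint2 heq
      (h1min _ hm (midpoint_map π₁ π₂ measurable_fst h10 h20)
        (midpoint_map π₁ π₂ measurable_snd h11 h21))
  · -- marginal of a dynamical solution solves the static problem
    rintro P ⟨hPp, hP0, hP1, hPf, hPmin⟩
    haveI := hPp
    haveI : IsProbabilityMeasure (P.map T) := Measure.isProbabilityMeasure_map hT.aemeasurable
    have hle : relEnt (P.map T) RT ≤ relEnt P R := relEnt_map_le hT
    refine ⟨inferInstance, by rw [hmap0 P]; exact hP0, by rw [hmap1 P]; exact hP1,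
      lt_of_le_of_lt hle hPf, ?_⟩
    intro ρ hρp hρ0 hρ1
    haveI := hρp
    by_cases hρf : relEnt ρ RT = ⊤
    · rw [hρf]; exact le_top
    obtain ⟨hρac, hρint⟩ := of_relEnt_ne_top hρf
    haveI : IsProbabilityMeasure (ρ.bind B) := bridge_bind_prob hBm hBp
    have hQmapT : (ρ.bind B).map T = ρ := bridge_bind_map hBm hBp hpin hT
    have hQ0 : (ρ.bind B).map (X 0) = μ₀ := by rw [← hmap0, hQmapT]; exact hρ0
    have hQ1 : (ρ.bind B).map (X 1) = μ₁ := by rw [← hmap1, hQmapT]; exact hρ1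
    calc relEnt (P.map T) RT ≤ relEnt P R := hle
      _ ≤ relEnt (ρ.bind B) R := hPmin _ inferInstance hQ0 hQ1
      _ = relEnt ρ RT := bridge_relEnt hBm hBp hpin hT hRbind' hρac
  · -- mixture of bridges of a static solution solves the dynamical problem
    rintro π ⟨hπp, hπ0, hπ1, hπf, hπmin⟩
    haveI := hπp
    obtain ⟨hπac, hπint⟩ := of_relEnt_ne_top hπf.ne
    haveI : IsProbabilityMeasure (π.bind B) := bridge_bind_prob hBm hBp
    have hPmapT : (π.bind B).map T = π := bridge_bind_map hBm hBp hpin hT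
    have hE : relEnt (π.bind B) R = relEnt π RT := bridge_relEnt hBm hBp hpin hT hRbind' hπac
    refine ⟨inferInstance, by rw [← hmap0, hPmapT]; exact hπ0,
      by rw [← hmap1, hPmapT]; exact hπ1, by rw [hE]; exact hπf, ?_⟩
    intro Q hQp hQ0 hQ1
    haveI := hQp
    by_cases hQf : relEnt Q R = ⊤
    · rw [hQf]; exact le_top
    obtain ⟨hQac, hQint⟩ := of_relEnt_ne_top hQf
    haveI : IsProbabilityMeasure (Q.map T) := Measure.isProbabilityMeasure_map hT.aemeasurable
    calc relEnt (π.bind B) R = relEnt π RT := hE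
      _ ≤ relEnt (Q.map T) RT := hπmin _ inferInstance
          (by rw [hmap0 Q]; exact hQ0) (by rw [hmap1 Q]; exact hQ1)
      _ ≤ relEnt Q R := relEnt_map_le hT
end
end
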